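/- arXiv:1602.03496 — 5 statements merged into one kernel-verified Lean document; each statement's English description precedes it below -/
import Mathlib

section
/- Let m ≥ 4 be an integer, let f = (x^m − y^m)(x^m − z^m)(y^m − z^m) ∈ S, and set a₁ = x^{m+1} − 2xy^m − 2xz^m, b₁ = y^{m+1} − 2yz^m − 2yx^m, c₁ = z^{m+1} − 2zx^m − 2zy^m. Then for every integer j with m+1 ≤ j ≤ 2m−3 and every homogeneous polynomial g ∈ S_{j−m−1}, if ∂_x(g·a₁) + ∂_y(g·b₁) + ∂_z(g·c₁) ∈ J_f, then g = 0. (Equivalently, the map φ_j : S_{j−(m+1)} → (S/J_f)_{j−1}, g ↦ [(g a₁)_x + (g b₁)_y + (g c₁)_z], is injective for m+1 ≤ j < 2m−2.) -/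
open MvPolynomial

noncomputable section

abbrev P3 : Type := MvPolynomial (Fin 3) ℂ

abbrev X0 : P3 := X 0
abbrev X1 : P3 := X 1
abbrev X2 : P3 := X 2

/-- The graded piece `S_j` of `S = ℂ[x,y,z]`, with `S_j = 0` for `j < 0`. -/
def homZ (j : ℤ) : Submodule ℂ P3 :=
  if 0 ≤ j then homogeneousSubmodule (Fin 3) ℂ j.toNat else ⊥

/-- The Jacobian ideal of `f`. -/
def Jf (f : P3) : Ideal P3 :=
  Ideal.span {pderiv 0 f, pderiv 1 f, pderiv 2 f}

/-- The space of syzygies `(a,b,c) ∈ S_{q-2}³` of `f` whose divergence lies in the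
Jacobian ideal: the representatives of `E₂^{1-t,t}(f)_k`, where `q = t·d + k`. -/
def E2Z (f : P3) (q : ℤ) : Submodule ℂ (P3 × P3 × P3) where
  carrier := {v | v.1 ∈ homZ (q - 2) ∧ v.2.1 ∈ homZ (q - 2) ∧ v.2.2 ∈ homZ (q - 2) ∧
    v.1 * pderiv 0 f + v.2.1 * pderiv 1 f + v.2.2 * pderiv 2 f = 0 ∧
    pderiv 0 v.1 + pderiv 1 v.2.1 + pderiv 2 v.2.2 ∈ Jf f}
  zero_mem' := by
    exact ⟨zero_mem _, zero_mem _, zero_mem _, by simp, by simp⟩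
  add_mem' := by
    rintro a b ⟨ha1, ha2, ha3, ha4, ha5⟩ ⟨hb1, hb2, hb3, hb4, hb5⟩
    refine ⟨add_mem ha1 hb1, add_mem ha2 hb2, add_mem ha3 hb3,
      by simp only [Prod.fst_add, Prod.snd_add]; linear_combination ha4 + hb4, ?_⟩
    have h : pderiv (0 : Fin 3) (a.1 + b.1) + pderiv 1 (a.2.1 + b.2.1)
        + pderiv 2 (a.2.2 + b.2.2)
        = (pderiv 0 a.1 + pderiv 1 a.2.1 + pderiv 2 a.2.2)
          + (pderiv 0 b.1 + pderiv 1 b.2.1 + pderiv 2 b.2.2) := by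
      simp only [map_add]; ring
    simpa only [Prod.fst_add, Prod.snd_add, h] using add_mem ha5 hb5
  smul_mem' := by
    rintro c a ⟨ha1, ha2, ha3, ha4, ha5⟩
    refine ⟨Submodule.smul_mem _ c ha1, Submodule.smul_mem _ c ha2,
      Submodule.smul_mem _ c ha3, ?_, ?_⟩
    · simp only [Prod.smul_fst, Prod.smul_snd, smul_mul_assoc, ← smul_add, ha4, smul_zero]
    · have h : pderiv (0 : Fin 3) (c • a.1) + pderiv 1 (c • a.2.1) + pderiv 2 (c • a.2.2)
          = C c * (pderiv 0 a.1 + pderiv 1 a.2.1 + pderiv 2 a.2.2) := by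
        simp only [smul_eq_C_mul, pderiv_C_mul]; ring
      simpa only [Prod.smul_fst, Prod.smul_snd, h] using Ideal.mul_mem_left _ _ ha5

/-- The space of Koszul syzygies of `f` of degree `q` (i.e. `(df ∧ Ω¹)_q`),
coming from `P, Q, R ∈ S_{q-d-1}` where `d = deg f`. -/
def KZ (f : P3) (d q : ℤ) : Submodule ℂ (P3 × P3 × P3) :=
  Submodule.span ℂ {v | ∃ Pp Qq Rr : P3, Pp ∈ homZ (q - d - 1) ∧ Qq ∈ homZ (q - d - 1) ∧
    Rr ∈ homZ (q - d - 1) ∧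
    v = (Rr * pderiv 1 f - Qq * pderiv 2 f,
         Pp * pderiv 2 f - Rr * pderiv 0 f,
         Qq * pderiv 0 f - Pp * pderiv 1 f)}

/-- The term `E₂^{1-t,t}(f)_k` of the second page of Dimca's Koszul-de Rham spectral
sequence, where `q = t·d + k`: syzygies of degree `q-2` with divergence in the Jacobian
ideal, modulo Koszul syzygies. -/
abbrev E2Q (f : P3) (d q : ℤ) :=
  E2Z f q ⧸ (KZ f d q).comap (E2Z f q).subtype



section Helpers

lemma deg3 (w : Fin 3 →₀ ℕ) : w.degree = w 0 + w 1 + w 2 := by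
  rw [Finsupp.degree_apply, Finset.sum_subset (Finset.subset_univ w.support)
    (fun i _ hi => Finsupp.notMem_support_iff.mp hi), Fin.sum_univ_three]

lemma X_mul_pd_monomial (i : Fin 3) (v : Fin 3 →₀ ℕ) (c : ℂ) :
    (X i : P3) * pderiv i (monomial v c) = monomial v (c * v i) := by
  rw [pderiv_monomial]
  rcases Nat.eq_zero_or_pos (v i) with h0 | h0
  · simp [h0]
  · have hvv : Finsupp.single i 1 + (v - Finsupp.single i 1) = v := by
      ext k
      rcases eq_or_ne i k with rfl | hk
      · simp only [Finsupp.add_apply, Finsupp.tsub_apply, Finsupp.single_eq_same]; omega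
      · simp only [Finsupp.add_apply, Finsupp.tsub_apply, Finsupp.single_eq_of_ne' hk]; omega
    rw [show (X i : P3) = monomial (Finsupp.single i 1) 1 from rfl, monomial_mul, one_mul, hvv]

lemma X_mul_pd_homog (i : Fin 3) {p : P3} {n : ℕ} (h : p.IsHomogeneous n) :
    ((X i : P3) * pderiv i p).IsHomogeneous n := by
  conv_lhs => rw [p.as_sum]
  rw [map_sum, Finset.mul_sum]
  apply IsHomogeneous.sum
  intro v hv
  rw [X_mul_pd_monomial]
  exact isHomogeneous_monomial _ (by
    by_contra hne
    exact mem_support_iff.mp hv (h.coeff_eq_zero hne))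

lemma pd_homog (i : Fin 3) {p : P3} {n : ℕ} (h : p.IsHomogeneous n) :
    (pderiv i p).IsHomogeneous (n - 1) := by
  conv_lhs => rw [p.as_sum]
  rw [map_sum]
  apply IsHomogeneous.sum
  intro v hv
  rw [pderiv_monomial]
  rcases Nat.eq_zero_or_pos (v i) with h0 | h0
  · simp [h0, isHomogeneous_zero]
  · apply isHomogeneous_monomial
    have hd : v.degree = n := by
      by_contra hne
      exact mem_support_iff.mp hv (h.coeff_eq_zero hne)
    rw [deg3] at hd ⊢
    simp only [Finsupp.tsub_apply, Finsupp.single_apply]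
    fin_cases i <;> simp_all <;> omega

lemma euler3 {p : P3} {n : ℕ} (h : p.IsHomogeneous n) :
    (X 0 : P3) * pderiv 0 p + X 1 * pderiv 1 p + X 2 * pderiv 2 p = (n : ℂ) • p := by
  nth_rewrite 1 2 3 [p.as_sum]
  conv_rhs => rw [p.as_sum]
  rw [map_sum, map_sum, map_sum, Finset.mul_sum, Finset.mul_sum, Finset.mul_sum,
    ← Finset.sum_add_distrib, ← Finset.sum_add_distrib, Finset.smul_sum]
  apply Finset.sum_congr rfl
  intro v hv
  rw [X_mul_pd_monomial, X_mul_pd_monomial, X_mul_pd_monomial, smul_monomial]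
  have hd : v.degree = n := by
    by_contra hne
    exact mem_support_iff.mp hv (h.coeff_eq_zero hne)
  rw [deg3] at hd
  rw [← map_add, ← map_add]
  congr 1
  rw [← hd]
  rw [smul_eq_mul]; push_cast
  ring

lemma mem_span_triple {a b c x : P3} (h : x ∈ Ideal.span {a, b, c}) :
    ∃ p q r : P3, x = p * a + q * b + r * c := by
  rw [Ideal.span, Submodule.mem_span_insert] at h
  obtain ⟨p, z, hz, rfl⟩ := h
  rw [Submodule.mem_span_insert] at hz
  obtain ⟨q, w, hw, rfl⟩ := hz
  rw [Submodule.mem_span_singleton] at hw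
  obtain ⟨r, rfl⟩ := hw
  exact ⟨p, q, r, by rw [smul_eq_mul, smul_eq_mul, smul_eq_mul]; ring⟩

lemma low_deg_vanish {D q1 q2 q3 p1 p2 p3 : P3} {n d : ℕ} (hn : n < d)
    (hD : D.IsHomogeneous n) (h1 : q1.IsHomogeneous d) (h2 : q2.IsHomogeneous d)
    (h3 : q3.IsHomogeneous d) (h : D = p1 * q1 + p2 * q2 + p3 * q3) : D = 0 := by
  ext μ
  rw [coeff_zero]
  by_cases hdeg : μ.degree = n
  · have key : ∀ p q : P3, q.IsHomogeneous d → coeff μ (p * q) = 0 := by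
      intro p q hq
      rw [coeff_mul]
      apply Finset.sum_eq_zero
      rintro ⟨a, b⟩ hab
      rw [Finset.HasAntidiagonal.mem_antidiagonal] at hab
      simp only at hab
      have hb : b.degree ≤ μ.degree := by
        rw [← hab, deg3, deg3]
        simp only [Finsupp.add_apply]
        omega
      have : coeff b q = 0 := hq.coeff_eq_zero (by omega)
      rw [this, mul_zero]
    rw [h, coeff_add, coeff_add, key _ _ h1, key _ _ h2, key _ _ h3]
    ring
  · exact hD.coeff_eq_zero hdeg

lemma split1 {A B C : P3} {e m : ℕ} (he : e < m) (i0 i1 i2 : Fin 3)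
    (h01 : i1 ≠ i0) (h02 : i2 ≠ i0)
    (hA : A.IsHomogeneous e)
    (h : X i0 ^ m * A + X i1 ^ m * B + X i2 ^ m * C = 0) : A = 0 := by
  ext μ
  rw [coeff_zero]
  by_contra hne
  have hdeg : μ.degree = e := by
    by_contra hd
    exact hne (hA.coeff_eq_zero hd)
  have hτ := congrArg (coeff (Finsupp.single i0 m + μ)) h
  rw [coeff_add, coeff_add, coeff_zero, X_pow_eq_monomial, coeff_monomial_mul] at hτ
  have hcomp : ∀ i : Fin 3, μ i ≤ e := fun i => hdeg ▸ Finsupp.le_degree i μ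
  have key : ∀ (i : Fin 3) (p : P3), i ≠ i0 →
      coeff (Finsupp.single i0 m + μ) (X i ^ m * p) = 0 := by
    intro i p hi
    rw [coeff_mul]
    apply Finset.sum_eq_zero
    rintro ⟨a, b⟩ hab
    rw [Finset.HasAntidiagonal.mem_antidiagonal] at hab
    simp only at hab
    rw [coeff_X_pow]
    split
    · next ha =>
      exfalso
      have ha' : a = Finsupp.single i m := by simpa using ha.symm
      have h1 := congrArg (fun w => w i) hab
      rw [ha'] at h1
      simp only [Finsupp.add_apply, Finsupp.single_eq_same,
        Finsupp.single_eq_of_ne' (Ne.symm hi)] at h1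
      have h2 := hcomp i
      omega
    · rw [zero_mul]
  rw [key i1 B h01, key i2 C h02, one_mul] at hτ
  exact hne (by simpa using hτ)

end Helpers

/-- For the monomial arrangement `A(m,m,3)` with `m ≥ 4`, the map
`φ_j : S_{j-(m+1)} → (S/J_f)_{j-1}`, `g ↦ [(g a₁)_x + (g b₁)_y + (g c₁)_z]`,
is injective for `m + 1 ≤ j < 2m - 2`. -/
theorem stmt0 (m : ℕ) (hm : 4 ≤ m) (f : P3)
    (hf : f = (X0 ^ m - X1 ^ m) * (X0 ^ m - X2 ^ m) * (X1 ^ m - X2 ^ m))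
    (a1 b1 c1 : P3)
    (ha1 : a1 = X0 ^ (m + 1) - 2 * X0 * X1 ^ m - 2 * X0 * X2 ^ m)
    (hb1 : b1 = X1 ^ (m + 1) - 2 * X1 * X2 ^ m - 2 * X1 * X0 ^ m)
    (hc1 : c1 = X2 ^ (m + 1) - 2 * X2 * X0 ^ m - 2 * X2 * X1 ^ m)
    (j : ℕ) (hj1 : m + 1 ≤ j) (hj2 : j ≤ 2 * m - 3)
    (g : P3) (hg : g.IsHomogeneous (j - (m + 1)))
    (hdiv : pderiv 0 (g * a1) + pderiv 1 (g * b1) + pderiv 2 (g * c1) ∈ Jf f) :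
    g = 0 := by
  have hg' : g.IsHomogeneous (j - (m + 1)) := hg
  set e := j - (m + 1) with he_def
  have hem : e + 4 ≤ m := by omega
  set gx := pderiv (0 : Fin 3) g with hgx
  set gy := pderiv (1 : Fin 3) g with hgy
  set gz := pderiv (2 : Fin 3) g with hgz
  set PA : P3 := X 0 * gx + ((m : P3) - 3) * g - 2 * (X 1 * gy) - 2 * (X 2 * gz) with hPAdef
  set PB : P3 := X 1 * gy + ((m : P3) - 3) * g - 2 * (X 2 * gz) - 2 * (X 0 * gx) with hPBdef
  set PC : P3 := X 2 * gz + ((m : P3) - 3) * g - 2 * (X 0 * gx) - 2 * (X 1 * gy) with hPCdef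
  have hm3 : ((m : P3) - 3) = C ((m : ℂ) - 3) := by rw [map_sub, map_natCast, map_ofNat]
  have h2C : (2 : P3) = C (2 : ℂ) := (map_ofNat C 2).symm
  -- homogeneity of PA, PB, PC
  have hPA : PA.IsHomogeneous e := by
    rw [hPAdef, hm3, h2C]
    exact (((X_mul_pd_homog 0 hg').add (hg'.C_mul _)).sub
      ((X_mul_pd_homog 1 hg').C_mul _)).sub ((X_mul_pd_homog 2 hg').C_mul _)
  have hPB : PB.IsHomogeneous e := by
    rw [hPBdef, hm3, h2C]
    exact (((X_mul_pd_homog 1 hg').add (hg'.C_mul _)).sub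
      ((X_mul_pd_homog 2 hg').C_mul _)).sub ((X_mul_pd_homog 0 hg').C_mul _)
  have hPC : PC.IsHomogeneous e := by
    rw [hPCdef, hm3, h2C]
    exact (((X_mul_pd_homog 2 hg').add (hg'.C_mul _)).sub
      ((X_mul_pd_homog 0 hg').C_mul _)).sub ((X_mul_pd_homog 1 hg').C_mul _)
  -- derivatives of a1, b1, c1
  have h2p : ∀ i : Fin 3, pderiv i (2 : P3) = 0 := fun i => by rw [h2C, pderiv_C]
  have d0a : pderiv 0 a1 = ((m : P3) + 1) * X 0 ^ m - 2 * X 1 ^ m - 2 * X 2 ^ m := by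
    subst ha1
    simp only [map_sub, pderiv_mul, pderiv_pow, pderiv_X_self,
      pderiv_X_of_ne (by decide : (1 : Fin 3) ≠ 0),
      pderiv_X_of_ne (by decide : (2 : Fin 3) ≠ 0), Nat.add_sub_cancel, h2p]
    push_cast
    ring
  have d1b : pderiv 1 b1 = ((m : P3) + 1) * X 1 ^ m - 2 * X 2 ^ m - 2 * X 0 ^ m := by
    subst hb1
    simp only [map_sub, pderiv_mul, pderiv_pow, pderiv_X_self,
      pderiv_X_of_ne (by decide : (2 : Fin 3) ≠ 1),
      pderiv_X_of_ne (by decide : (0 : Fin 3) ≠ 1), Nat.add_sub_cancel, h2p]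
    push_cast
    ring
  have d2c : pderiv 2 c1 = ((m : P3) + 1) * X 2 ^ m - 2 * X 0 ^ m - 2 * X 1 ^ m := by
    subst hc1
    simp only [map_sub, pderiv_mul, pderiv_pow, pderiv_X_self,
      pderiv_X_of_ne (by decide : (0 : Fin 3) ≠ 2),
      pderiv_X_of_ne (by decide : (1 : Fin 3) ≠ 2), Nat.add_sub_cancel, h2p]
    push_cast
    ring
  -- the key identity
  have key : pderiv 0 (g * a1) + pderiv 1 (g * b1) + pderiv 2 (g * c1)
      = X 0 ^ m * PA + X 1 ^ m * PB + X 2 ^ m * PC := by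
    rw [pderiv_mul, pderiv_mul, pderiv_mul, d0a, d1b, d2c, ← hgx, ← hgy, ← hgz,
      hPAdef, hPBdef, hPCdef, ha1, hb1, hc1]
    ring
  -- homogeneity of f and its derivatives
  have hf3 : f.IsHomogeneous (3 * m) := by
    rw [hf, show 3 * m = m + m + m by ring]
    exact (((isHomogeneous_X_pow (0 : Fin 3) m).sub (isHomogeneous_X_pow 1 m)).mul
      ((isHomogeneous_X_pow 0 m).sub (isHomogeneous_X_pow 2 m))).mul
      ((isHomogeneous_X_pow 1 m).sub (isHomogeneous_X_pow 2 m))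
  -- divergence is zero
  have hD0 : pderiv 0 (g * a1) + pderiv 1 (g * b1) + pderiv 2 (g * c1) = 0 := by
    rw [Jf] at hdiv
    obtain ⟨p1, p2, p3, hD⟩ := mem_span_triple hdiv
    refine low_deg_vanish (n := m + e) (d := 3 * m - 1) (by omega) ?_
      (pd_homog 0 hf3) (pd_homog 1 hf3) (pd_homog 2 hf3) hD
    rw [key]
    exact (((isHomogeneous_X_pow (0 : Fin 3) m).mul hPA).add
      ((isHomogeneous_X_pow 1 m).mul hPB)).add ((isHomogeneous_X_pow 2 m).mul hPC)
  have hsplit : X 0 ^ m * PA + X 1 ^ m * PB + X 2 ^ m * PC = 0 := by rw [← key, hD0]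
  have hPA0 : PA = 0 :=
    split1 (show e < m by omega) 0 1 2 (by decide) (by decide) hPA hsplit
  have hsplitB : X 1 ^ m * PB + X 0 ^ m * PA + X 2 ^ m * PC = 0 := by
    linear_combination hsplit
  have hsplitC : X 2 ^ m * PC + X 0 ^ m * PA + X 1 ^ m * PB = 0 := by
    linear_combination hsplit
  have hPB0 : PB = 0 :=
    split1 (show e < m by omega) 1 0 2 (by decide) (by decide) hPB hsplitB
  have hPC0 : PC = 0 :=
    split1 (show e < m by omega) 2 0 1 (by decide) (by decide) hPC hsplitC
  -- Euler identity
  have heuler : (X 0 : P3) * gx + X 1 * gy + X 2 * gz = (e : P3) * g := by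
    rw [hgx, hgy, hgz, euler3 hg', smul_eq_C_mul, map_natCast]
  -- conclude
  have hfin : (3 * (m : P3) - 9 - 3 * (e : P3)) * g = 0 := by
    rw [hPAdef] at hPA0
    rw [hPBdef] at hPB0
    rw [hPCdef] at hPC0
    linear_combination hPA0 + hPB0 + hPC0 + 3 * heuler
  have hC : (3 * (m : P3) - 9 - 3 * (e : P3)) = C (3 * (m : ℂ) - 9 - 3 * (e : ℂ)) := by
    rw [map_sub, map_sub, map_mul, map_mul, map_natCast, map_natCast, map_ofNat, map_ofNat]
  rw [hC] at hfin
  rcases mul_eq_zero.mp hfin with hc | hg0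
  · exfalso
    rw [MvPolynomial.C_eq_zero] at hc
    have hme : (m : ℂ) = (e : ℂ) + 3 := by linear_combination hc / 3
    have : m = e + 3 := by exact_mod_cast hme
    omega
  · exact hg0


end
end

section
/- Let f ∈ S be a squarefree homogeneous polynomial of degree d ≥ 1. For an integer j, let (df∧Ω¹)_j ⊆ S_{j−2}³ denote the subspace of Koszul syzygies of degree j, namely {(R f_y − Q f_z, P f_z − R f_x, Q f_x − P f_y) : P, Q, R ∈ S_{j−d−1}}. Then dim_ℂ (df∧Ω¹)_j = 0 for j ≤ d, and dim_ℂ (df∧Ω¹)_j = 3·(j−d+1)(j−d)/2 = 3·binom(j−d+1, 2) for d < j < 2d. -/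
open MvPolynomial

noncomputable section

namespace Aux


lemma degree_eq_sum_univ (u : Fin 3 →₀ ℕ) : u.degree = ∑ i, u i :=
  Finset.sum_subset (Finset.subset_univ _)
    (fun i _ h => Finsupp.notMem_support_iff.mp h)

lemma degree_add (u v : Fin 3 →₀ ℕ) : (u + v).degree = u.degree + v.degree := by
  simp [degree_eq_sum_univ, Finset.sum_add_distrib]

lemma isHom_degree {φ : P3} {n : ℕ} (h : φ.IsHomogeneous n) {u : Fin 3 →₀ ℕ}
    (hc : coeff u φ ≠ 0) : u.degree = n := by
  rw [Finsupp.degree_eq_weight_one]; exact h hc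

lemma degree_sum_eq (u : Fin 3 →₀ ℕ) : (u.sum fun _ e => e) = u.degree := rfl

lemma X_mul_pderiv_monomial (u : Fin 3 →₀ ℕ) (c : ℂ) (i : Fin 3) :
    X i * pderiv i (monomial u c) = (u i) • monomial u c := by
  rw [pderiv_monomial]
  by_cases h : u i = 0
  · simp [h]
  · rw [X, monomial_mul, one_mul]
    have huu : Finsupp.single i 1 + (u - Finsupp.single i 1) = u := by
      ext j
      rcases eq_or_ne j i with rfl | hj
      · simp [Finsupp.add_apply, Finsupp.single_apply, Finsupp.tsub_apply]
        omega
      · simp [Finsupp.single_apply, (Ne.symm hj), Finsupp.tsub_apply]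
    rw [huu, smul_monomial]
    congr 1
    rw [nsmul_eq_mul]
    ring

lemma euler {f : P3} {n : ℕ} (hf : f.IsHomogeneous n) :
    ∑ i : Fin 3, X i * pderiv i f = n • f := by
  calc ∑ i : Fin 3, X i * pderiv i f
      = ∑ i : Fin 3, ∑ u ∈ f.support, X i * pderiv i (monomial u (coeff u f)) := by
        refine Finset.sum_congr rfl fun i _ => ?_
        conv_lhs => rw [f.as_sum]
        rw [map_sum, Finset.mul_sum]
    _ = ∑ u ∈ f.support, ∑ i : Fin 3, X i * pderiv i (monomial u (coeff u f)) :=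
        Finset.sum_comm
    _ = ∑ u ∈ f.support, n • monomial u (coeff u f) := by
        refine Finset.sum_congr rfl fun u hu => ?_
        simp_rw [X_mul_pderiv_monomial, ← Finset.sum_smul]
        rw [← degree_eq_sum_univ, isHom_degree hf (mem_support_iff.mp hu)]
    _ = n • f := by rw [← Finset.smul_sum, ← f.as_sum]

lemma pderiv_isHom {f : P3} {n : ℕ} (hf : f.IsHomogeneous n) (i : Fin 3) :
    (pderiv i f).IsHomogeneous (n - 1) := by
  conv_lhs => rw [f.as_sum]
  rw [map_sum]
  apply IsHomogeneous.sum
  intro u hu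
  rw [pderiv_monomial]
  by_cases h : u i = 0
  · rw [h]; simp only [Nat.cast_zero, mul_zero, map_zero]; exact isHomogeneous_zero _ _ _
  · apply isHomogeneous_monomial
    have hd : u.degree = n := isHom_degree hf (mem_support_iff.mp hu)
    rw [degree_eq_sum_univ] at hd ⊢
    have hn : 1 ≤ u i := Nat.one_le_iff_ne_zero.mpr h
    fin_cases i <;>
      simp only [Fin.sum_univ_three, Finsupp.tsub_apply, Finsupp.single_apply] at hd ⊢ <;>
      simp_all <;> omega



lemma coeff_pderiv (p : P3) (i : Fin 3) (w : Fin 3 →₀ ℕ) :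
    coeff w (pderiv i p) = ((w i : ℂ) + 1) * coeff (w + Finsupp.single i 1) p := by
  induction p using MvPolynomial.induction_on' with
  | monomial v c =>
    rw [pderiv_monomial, coeff_monomial, coeff_monomial]
    rcases eq_or_ne v (w + Finsupp.single i 1) with hv | hv
    · have hvi : v i = w i + 1 := by rw [hv]; simp [Finsupp.single_apply]
      have hsub : v - Finsupp.single i 1 = w := by
        ext j
        rcases eq_or_ne j i with rfl | hj
        · rw [hv]; simp [Finsupp.tsub_apply, Finsupp.single_apply]
        · rw [hv]; simp [Finsupp.tsub_apply, Finsupp.single_apply, Ne.symm hj]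
      rw [if_pos hsub, if_pos hv, hvi]
      push_cast
      ring
    · rw [if_neg hv, mul_zero]
      by_cases hvi : v i = 0
      · rw [hvi]
        by_cases h : v - Finsupp.single i 1 = w <;> simp [h]
      · have hsub : v - Finsupp.single i 1 ≠ w := by
          intro h
          apply hv
          rw [← h]
          ext j
          rcases eq_or_ne j i with rfl | hj
          · simp only [Finsupp.add_apply, Finsupp.tsub_apply, Finsupp.single_apply,
              if_pos rfl]
            simp
            omega
          · simp [Finsupp.tsub_apply, Finsupp.single_apply, Ne.symm hj]
        rw [if_neg hsub]
  | add p q hp hq => simp [hp, hq, mul_add]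

lemma eq_C_of_pderiv_eq_zero {p : P3} (h : ∀ i, pderiv i p = 0) :
    p = C (coeff 0 p) := by
  apply MvPolynomial.ext
  intro u
  rcases eq_or_ne u 0 with rfl | hu
  · simp
  · rw [coeff_C, if_neg (Ne.symm hu)]
    obtain ⟨i, hi⟩ : ∃ i, u i ≠ 0 := by
      by_contra hc
      push_neg at hc
      exact hu (Finsupp.ext hc)
    set w := u - Finsupp.single i 1 with hw
    have hkey := coeff_pderiv p i w
    rw [h i, coeff_zero] at hkey
    have huu : w + Finsupp.single i 1 = u := by
      ext j
      rcases eq_or_ne j i with rfl | hj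
      · simp only [hw, Finsupp.add_apply, Finsupp.tsub_apply, Finsupp.single_apply,
          if_pos rfl]
        simp
        omega
      · simp [hw, Finsupp.tsub_apply, Finsupp.single_apply, Ne.symm hj]
    rw [huu] at hkey
    have hne : ((w i : ℂ) + 1) ≠ 0 := by
      have : (((w i + 1 : ℕ)) : ℂ) ≠ 0 := Nat.cast_ne_zero.mpr (Nat.succ_ne_zero _)
      push_cast at this
      exact this
    exact (mul_eq_zero.mp hkey.symm).resolve_left hne

lemma not_isUnit_X (i : Fin 3) : ¬ IsUnit (X i : P3) := by
  intro h
  obtain ⟨v, hv⟩ := h.exists_right_inv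
  have := congrArg (eval (fun _ => (0:ℂ))) hv
  simp at this



lemma top_component_ne_zero {p : P3} (hp : p ≠ 0) :
    homogeneousComponent p.totalDegree p ≠ 0 := by
  obtain ⟨u, hu, hdeg⟩ : ∃ u ∈ p.support, p.totalDegree = u.sum fun _ e => e :=
    Finset.exists_mem_eq_sup p.support (support_nonempty.mpr hp) fun s => s.sum fun _ e => e
  intro hcon
  have h2 := congrArg (coeff u) hcon
  have hdeg' : u.degree = p.totalDegree := by rw [hdeg]; rfl
  rw [coeff_homogeneousComponent, coeff_zero, if_pos hdeg'] at h2
  exact mem_support_iff.mp hu h2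

lemma totalDegree_le_of_dvd {a q : P3} (hq : q ≠ 0) (h : a ∣ q) :
    a.totalDegree ≤ q.totalDegree := by
  obtain ⟨t, rfl⟩ := h
  have ha : a ≠ 0 := fun h => hq (by rw [h, zero_mul])
  have ht : t ≠ 0 := fun h => hq (by rw [h, mul_zero])
  set k := a.totalDegree with hk
  set l := t.totalDegree with hl
  have key : homogeneousComponent (k + l) (a * t) =
      homogeneousComponent k a * homogeneousComponent l t := by
    conv_lhs => rw [← sum_homogeneousComponent a, ← sum_homogeneousComponent t, ← hk, ← hl,
      Finset.sum_mul_sum]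
    rw [map_sum]
    have inner : ∀ i ∈ Finset.range (k + 1),
        homogeneousComponent (k + l)
          (∑ j ∈ Finset.range (l + 1),
            homogeneousComponent i a * homogeneousComponent j t) =
        if i = k then homogeneousComponent k a * homogeneousComponent l t else 0 := by
      intro i hi
      rw [map_sum]
      have term : ∀ j ∈ Finset.range (l + 1),
          homogeneousComponent (k + l)
            (homogeneousComponent i a * homogeneousComponent j t) =
          if k + l = i + j then homogeneousComponent i a * homogeneousComponent j t
          else 0 :=
        fun j _ => homogeneousComponent_of_mem
          ((homogeneousComponent_isHomogeneous i a).mul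
            (homogeneousComponent_isHomogeneous j t))
      rw [Finset.sum_congr rfl term]
      rcases eq_or_ne i k with rfl | hik
      · rw [if_pos rfl, Finset.sum_eq_single l]
        · rw [if_pos rfl]
        · intro j hj hjl
          rw [if_neg]
          intro hcon
          exact hjl (by omega)
        · intro hcon
          exact absurd (Finset.mem_range.mpr (by omega)) hcon
      · rw [if_neg hik, Finset.sum_eq_zero]
        intro j hj
        rw [Finset.mem_range] at hj
        rw [Finset.mem_range] at hi
        rw [if_neg]
        omega
    rw [Finset.sum_congr rfl inner, Finset.sum_ite_eq' _ k, if_pos (Finset.mem_range.mpr (by omega))]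
  have hne : homogeneousComponent (k + l) (a * t) ≠ 0 := by
    rw [key]
    exact mul_ne_zero (top_component_ne_zero ha) (top_component_ne_zero ht)
  obtain ⟨u, hu⟩ := support_nonempty.mpr hne
  have hcu := mem_support_iff.mp hu
  rw [coeff_homogeneousComponent] at hcu
  by_cases hdu : u.degree = k + l
  · rw [if_pos hdu] at hcu
    have : (u.sum fun _ e => e) ≤ (a * t).totalDegree :=
      le_totalDegree (mem_support_iff.mpr hcu)
    have hsum : (u.sum fun _ e => e) = u.degree := rfl
    omega
  · rw [if_neg hdu] at hcu
    exact absurd rfl hcu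

lemma totalDegree_pderiv_lt {p : P3} {i : Fin 3} (h : pderiv i p ≠ 0) :
    (pderiv i p).totalDegree < p.totalDegree := by
  have hp1 : 1 ≤ p.totalDegree := by
    by_contra hc
    push_neg at hc
    have h0 : p.totalDegree = 0 := by omega
    apply h
    have : p = C (coeff 0 p) := by
      apply MvPolynomial.ext
      intro u
      rcases eq_or_ne u 0 with rfl | hu
      · simp
      · rw [coeff_C, if_neg (Ne.symm hu)]
        by_contra hcu
        have := le_totalDegree (p := p) (mem_support_iff.mpr hcu)
        rw [h0, Nat.le_zero] at this
        apply hu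
        ext j
        have : ∀ s ∈ u.support, u s = 0 → False := by
          intro s hs hzero
          exact Finsupp.mem_support_iff.mp hs hzero
        by_contra hj
        have hmem : j ∈ u.support := Finsupp.mem_support_iff.mpr (by simpa using hj)
        have : (u.sum fun _ e => e) = 0 := ‹(u.sum fun _ e => e) = 0›
        have := Finset.sum_eq_zero_iff.mp this j hmem
        simpa using hj this
    rw [this, pderiv_C]
  -- bound: every monomial of pderiv i p has degree < totalDegree p
  conv_lhs => rw [p.as_sum, map_sum]
  refine lt_of_le_of_lt (totalDegree_finset_sum _ _) ?_
  rw [Finset.sup_lt_iff (show (⊥:ℕ) < p.totalDegree from hp1)]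
  intro u hu
  rw [pderiv_monomial]
  by_cases hui : u i = 0
  · rw [hui]
    simp only [Nat.cast_zero, mul_zero, map_zero, totalDegree_zero]
    omega
  · set w : Fin 3 →₀ ℕ := u - Finsupp.single i 1 with hwdef
    rcases eq_or_ne (coeff u p * (u i : ℂ)) 0 with hc | hc
    · rw [hc, map_zero, totalDegree_zero]; omega
    · rw [totalDegree_monomial _ hc]
      have h1 : (w.sum fun _ e => e) = w.degree := rfl
      have h2 : (u.sum fun _ e => e) = u.degree := rfl
      have hle : (u.sum fun _ e => e) ≤ p.totalDegree := le_totalDegree hu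
      have hdeg : w.degree + 1 = u.degree := by
        have h3 : u.degree = ∑ j, u j := Finset.sum_subset (Finset.subset_univ _)
          (fun j _ hj => Finsupp.notMem_support_iff.mp hj)
        have h4 : w.degree = ∑ j, w j := Finset.sum_subset (Finset.subset_univ _)
          (fun j _ hj => Finsupp.notMem_support_iff.mp hj)
        have h5 : ∀ j, w j = u j - (if i = j then 1 else 0) := by
          intro j
          rw [hwdef, Finsupp.tsub_apply, Finsupp.single_apply]
        rw [h3, h4]
        simp only [h5, Fin.sum_univ_three]
        fin_cases i <;> simp_all <;> omega
      omega



set_option maxHeartbeats 1000000 in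
lemma coprime_partials {f : P3} {d : ℕ} (hd : 1 ≤ d) (hsq : Squarefree f)
    (hf : f.IsHomogeneous d) {p : P3} (hp : Prime p)
    (h0 : p ∣ pderiv 0 f) (h1 : p ∣ pderiv 1 f) (h2 : p ∣ pderiv 2 f) : False := by
  have hpf : p ∣ f := by
    have he := euler hf
    rw [Fin.sum_univ_three] at he
    have hdvd : p ∣ (d : ℕ) • f := by
      rw [← he]
      exact dvd_add (dvd_add (h0.mul_left _) (h1.mul_left _)) (h2.mul_left _)
    rw [nsmul_eq_mul] at hdvd
    have hcast : ((d : ℕ) : P3) = C ((d : ℕ) : ℂ) := by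
      simp
    have hunit : IsUnit ((d : ℕ) : P3) := by
      rw [hcast]
      exact (isUnit_iff_ne_zero.mpr (by exact_mod_cast (Nat.one_le_iff_ne_zero.mp hd))).map C
    exact hunit.dvd_mul_left.mp hdvd
  obtain ⟨h, rfl⟩ := hpf
  have hph : ¬ p ∣ h := by
    rintro ⟨g, rfl⟩
    exact hp.not_unit (hsq p ⟨g, by ring⟩)
  obtain ⟨i, hi⟩ : ∃ i, pderiv i p ≠ 0 := by
    by_contra hall
    push_neg at hall
    have hc := eq_C_of_pderiv_eq_zero hall
    rcases eq_or_ne (coeff 0 p) 0 with h0' | h0'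
    · rw [h0', map_zero] at hc
      exact hp.ne_zero hc
    · exact hp.not_unit (hc ▸ (isUnit_iff_ne_zero.mpr h0').map (C : ℂ →+* P3))
  have hpd : p ∣ pderiv i (p * h) := by
    match i with
    | 0 => exact h0
    | 1 => exact h1
    | 2 => exact h2
  rw [pderiv_mul] at hpd
  have hd2 : p ∣ pderiv i p * h := by
    have := dvd_sub hpd (dvd_mul_right p (pderiv i h))
    simpa using this
  rcases hp.dvd_mul.mp hd2 with h' | h'
  · have hle := totalDegree_le_of_dvd hi h'
    have hlt := totalDegree_pderiv_lt hi
    omega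
  · exact hph h'

lemma dvd_of_cross (a : P3) :
    ∀ b c P Q R : P3, ¬(a = 0 ∧ b = 0 ∧ c = 0) →
      (∀ p : P3, Prime p → p ∣ a → p ∣ b → p ∣ c → False) →
      a * Q = b * P → a * R = c * P → b * R = c * Q → a ∣ P := by
  induction a using UniqueFactorizationMonoid.induction_on_prime with
  | h₁ =>
    intro b c P Q R habc _ e1 e2 _
    rw [zero_mul] at e1 e2
    rcases eq_or_ne P 0 with rfl | hP
    · exact dvd_zero 0
    · exfalso
      apply habc
      refine ⟨rfl, ?_, ?_⟩
      · rcases mul_eq_zero.mp e1.symm with h | h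
        · exact h
        · exact absurd h hP
      · rcases mul_eq_zero.mp e2.symm with h | h
        · exact h
        · exact absurd h hP
  | h₂ a ha =>
    intro b c P Q R _ _ _ _ _
    exact ha.dvd
  | h₃ a p ha hp ih =>
    intro b c P Q R habc hcop e1 e2 e3
    have hpP : p ∣ P := by
      by_contra hpP
      apply hcop p hp (dvd_mul_right p a)
      · rcases hp.dvd_mul.mp (show p ∣ b * P from ⟨a * Q, by linear_combination -e1⟩)
          with h | h
        · exact h
        · exact absurd h hpP
      · rcases hp.dvd_mul.mp (show p ∣ c * P from ⟨a * R, by linear_combination -e2⟩)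
          with h | h
        · exact h
        · exact absurd h hpP
    obtain ⟨P', rfl⟩ := hpP
    have hane : a ∣ P' := by
      apply ih b c P' Q R
      · rintro ⟨rfl, -, -⟩; exact ha rfl
      · intro q hq hqa hqb hqc
        exact hcop q hq (hqa.mul_left p) hqb hqc
      · exact mul_left_cancel₀ hp.ne_zero (by linear_combination e1)
      · exact mul_left_cancel₀ hp.ne_zero (by linear_combination e2)
      · exact e3
    exact mul_dvd_mul_left p hane


lemma f_ne_zero {f : P3} (hsq : Squarefree f) : f ≠ 0 := by
  rintro rfl
  exact not_isUnit_X 0 (hsq (X 0) (dvd_zero _))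

lemma partials_ne_zero {f : P3} {d : ℕ} (hd : 1 ≤ d) (hsq : Squarefree f)
    (hf : f.IsHomogeneous d) :
    ¬(pderiv 0 f = 0 ∧ pderiv 1 f = 0 ∧ pderiv 2 f = 0) := by
  rintro ⟨h0, h1, h2⟩
  have hall : ∀ i : Fin 3, pderiv i f = 0 := by
    intro i
    match i with
    | 0 => exact h0
    | 1 => exact h1
    | 2 => exact h2
  have hc := eq_C_of_pderiv_eq_zero hall
  have hne := f_ne_zero hsq
  have htd := hf.totalDegree hne
  rw [hc] at htd
  rcases eq_or_ne (coeff 0 f) 0 with h | h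
  · rw [h, map_zero] at hc; exact hne hc
  · rw [totalDegree_C] at htd; omega

lemma kernel_zero {f : P3} {d m : ℕ} (hd : 1 ≤ d) (hsq : Squarefree f)
    (hf : f.IsHomogeneous d) (hm : m + 1 < d)
    {P Q R : P3} (hP : P.IsHomogeneous m) (hQ : Q.IsHomogeneous m)
    (hR : R.IsHomogeneous m)
    (e1 : R * pderiv 1 f - Q * pderiv 2 f = 0)
    (e2 : P * pderiv 2 f - R * pderiv 0 f = 0)
    (e3 : Q * pderiv 0 f - P * pderiv 1 f = 0) : P = 0 ∧ Q = 0 ∧ R = 0 := by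
  set a := pderiv 0 f with hadef
  set b := pderiv 1 f with hbdef
  set c := pderiv 2 f with hcdef
  have hcop : ∀ p : P3, Prime p → p ∣ a → p ∣ b → p ∣ c → False :=
    fun p hp h0 h1 h2 => coprime_partials hd hsq hf hp h0 h1 h2
  have habc : ¬(a = 0 ∧ b = 0 ∧ c = 0) := partials_ne_zero hd hsq hf
  have key : ∀ x y z : P3, x.IsHomogeneous m →
      a * y = b * x → a * z = c * x → b * z = c * y → x = 0 → True := fun _ _ _ _ _ _ _ _ => trivial
  have hdvd : ∀ (u x : P3), u.IsHomogeneous (d-1) → x.IsHomogeneous m → u ∣ x → x = 0 := by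
    intro u x hu hx hux
    by_contra hx0
    have hu0 : u ≠ 0 := by rintro rfl; exact hx0 (zero_dvd_iff.mp hux)
    have h1 := totalDegree_le_of_dvd hx0 hux
    rw [hu.totalDegree hu0, hx.totalDegree hx0] at h1
    omega
  refine ⟨?_, ?_, ?_⟩
  · exact hdvd a P (pderiv_isHom hf 0) hP
      (dvd_of_cross a b c P Q R habc hcop (by linear_combination e3)
        (by linear_combination -e2) (by linear_combination e1))
  · exact hdvd b Q (pderiv_isHom hf 1) hQ
      (dvd_of_cross b a c Q P R (fun ⟨h1, h0, h2⟩ => habc ⟨h0, h1, h2⟩)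
        (fun p hp h1 h0 h2 => hcop p hp h0 h1 h2)
        (by linear_combination -e3) (by linear_combination e1)
        (by linear_combination -e2))
  · exact hdvd c R (pderiv_isHom hf 2) hR
      (dvd_of_cross c a b R P Q (fun ⟨h2, h0, h1⟩ => habc ⟨h0, h1, h2⟩)
        (fun p hp h2 h0 h1 => hcop p hp h0 h1 h2)
        (by linear_combination e2) (by linear_combination -e1)
        (by linear_combination e3))


def degEquiv (n : ℕ) : {u : Fin 3 →₀ ℕ // u.degree = n} ≃ Sym (Fin 3) n where
  toFun u := ⟨Finsupp.toMultiset u.1, by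
    rw [Finsupp.card_toMultiset]; exact u.2⟩
  invFun s := ⟨Multiset.toFinsupp s.1, by
    have h : (Multiset.toFinsupp s.1).degree = Multiset.card s.1 := by
      have := Finsupp.card_toMultiset (Multiset.toFinsupp s.1)
      rw [Multiset.toFinsupp_toMultiset] at this
      exact this.symm
    rw [h]
    exact s.2⟩
  left_inv u := Subtype.ext (Finsupp.toMultiset_toFinsupp u.1)
  right_inv s := Subtype.ext (Multiset.toFinsupp_toMultiset s.1)

instance degFintype (n : ℕ) : Fintype {u : Fin 3 →₀ ℕ // u.degree = n} :=
  Fintype.ofEquiv _ (degEquiv n).symm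

lemma card_deg (n : ℕ) :
    Fintype.card {u : Fin 3 →₀ ℕ // u.degree = n} = (n + 2).choose 2 := by
  rw [Fintype.card_congr (degEquiv n), Sym.card_sym_eq_choose]
  rw [Fintype.card_fin]
  have h1 : 3 + n - 1 = n + 2 := by omega
  rw [h1, ← Nat.choose_symm (by omega : n ≤ n + 2)]
  congr 1
  omega

def homEquiv (n : ℕ) :
    (homogeneousSubmodule (Fin 3) ℂ n) ≃ₗ[ℂ]
      ({u : Fin 3 →₀ ℕ | u.degree = n} →₀ ℂ) :=
  (LinearEquiv.ofEq _ _ (homogeneousSubmodule_eq_finsupp_supported (Fin 3) ℂ n)).trans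
    (AddMonoidAlgebra.supportedEquivFinsupp _)

instance homFinite (n : ℕ) : Module.Finite ℂ (homogeneousSubmodule (Fin 3) ℂ n) := by
  haveI : Fintype {u : Fin 3 →₀ ℕ | u.degree = n} := degFintype n
  haveI : Module.Finite ℂ ({u : Fin 3 →₀ ℕ | u.degree = n} →₀ ℂ) :=
    Module.Finite.equiv (Finsupp.linearEquivFunOnFinite ℂ ℂ _).symm
  exact Module.Finite.equiv (homEquiv n).symm

lemma finrank_hom (n : ℕ) :
    Module.finrank ℂ (homogeneousSubmodule (Fin 3) ℂ n) = (n + 2).choose 2 := by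
  haveI : Fintype {u : Fin 3 →₀ ℕ | u.degree = n} := degFintype n
  rw [(homEquiv n).finrank_eq, Module.finrank_finsupp, Module.finrank_self, mul_one,
    ← card_deg n]
  exact Fintype.card_congr (Equiv.subtypeEquivRight (fun u : Fin 3 →₀ ℕ => Iff.rfl))



abbrev H (m : ℕ) : Submodule ℂ P3 := homogeneousSubmodule (Fin 3) ℂ m

def kosMap (f : P3) (m : ℕ) : (H m × H m × H m) →ₗ[ℂ] P3 × P3 × P3 where
  toFun v := ((v.2.2 : P3) * pderiv 1 f - (v.2.1 : P3) * pderiv 2 f,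
              (v.1 : P3) * pderiv 2 f - (v.2.2 : P3) * pderiv 0 f,
              (v.2.1 : P3) * pderiv 0 f - (v.1 : P3) * pderiv 1 f)
  map_add' x y := by
    simp only [Submodule.coe_add, Prod.fst_add, Prod.snd_add, Prod.mk_add_mk]
    refine Prod.ext ?_ (Prod.ext ?_ ?_) <;> simp <;> ring
  map_smul' r x := by
    simp only [SetLike.val_smul, Prod.smul_fst, Prod.smul_snd, RingHom.id_apply,
      Prod.smul_mk, smul_sub, smul_mul_assoc]

lemma homZ_natCast (m : ℕ) : homZ (m : ℤ) = H m := by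
  rw [homZ, if_pos (by positivity)]
  norm_num

lemma KZ_eq_range (f : P3) (d q : ℤ) (m : ℕ) (hm : q - d - 1 = (m : ℤ)) :
    KZ f d q = LinearMap.range (kosMap f m) := by
  rw [KZ, hm, homZ_natCast]
  apply le_antisymm
  · rw [Submodule.span_le]
    rintro v ⟨Pp, Qq, Rr, hP, hQ, hR, rfl⟩
    exact ⟨⟨⟨Pp, hP⟩, ⟨Qq, hQ⟩, ⟨Rr, hR⟩⟩, rfl⟩
  · rintro v ⟨⟨⟨Pp, hP⟩, ⟨Qq, hQ⟩, ⟨Rr, hR⟩⟩, rfl⟩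
    exact Submodule.subset_span ⟨Pp, Qq, Rr, hP, hQ, hR, rfl⟩

lemma KZ_bot (f : P3) (d q : ℤ) (h : q - d - 1 < 0) : KZ f d q = ⊥ := by
  rw [KZ]
  have hz : homZ (q - d - 1) = ⊥ := by rw [homZ, if_neg (by omega)]
  refine le_bot_iff.mp ?_
  rw [Submodule.span_le]
  rintro v ⟨Pp, Qq, Rr, hP, hQ, hR, rfl⟩
  rw [hz] at hP hQ hR
  simp only [Submodule.mem_bot] at hP hQ hR
  subst hP; subst hQ; subst hR
  simp [Submodule.mem_bot, Prod.ext_iff]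

lemma kos_inj {f : P3} {d m : ℕ} (hd : 1 ≤ d) (hsq : Squarefree f)
    (hf : f.IsHomogeneous d) (hm : m + 1 < d) :
    Function.Injective (kosMap f m) := by
  rw [← LinearMap.ker_eq_bot]
  apply (Submodule.eq_bot_iff _).mpr
  rintro ⟨⟨P, hP⟩, ⟨Q, hQ⟩, ⟨R, hR⟩⟩ hv
  rw [LinearMap.mem_ker] at hv
  rw [kosMap] at hv
  simp only [LinearMap.coe_mk, AddHom.coe_mk, Prod.mk_eq_zero] at hv
  obtain ⟨e1, e2, e3⟩ := hv
  obtain ⟨h1, h2, h3⟩ := kernel_zero hd hsq hf hm hP hQ hR e1 e2 e3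
  refine Prod.ext ?_ (Prod.ext ?_ ?_) <;> simp [h1, h2, h3]

lemma finrank_KZ {f : P3} {d m : ℕ} (hd : 1 ≤ d) (hsq : Squarefree f)
    (hf : f.IsHomogeneous d) (hm : m + 1 < d) (q : ℤ) (hq : q - d - 1 = (m : ℤ)) :
    Module.finrank ℂ (KZ f d q) = 3 * (m + 2).choose 2 := by
  rw [KZ_eq_range f d q m hq,
    LinearMap.finrank_range_of_inj (kos_inj hd hsq hf hm),
    Module.finrank_prod, Module.finrank_prod, finrank_hom]
  ring


end Aux

/-- Dimensions of the graded pieces of the Koszul syzygies `(df ∧ Ω¹)_j` for a reduced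
plane curve of degree `d`: zero for `j ≤ d`, and `3·C(j-d+1,2)` for `d < j < 2d`. -/
theorem stmt2 (f : P3) (d : ℕ) (hd : 1 ≤ d) (hsq : Squarefree f)
    (hf : f.IsHomogeneous d) (j : ℕ) :
    (j ≤ d → KZ f (d : ℤ) (j : ℤ) = ⊥) ∧
    (d < j → j < 2 * d →
      Module.finrank ℂ (KZ f (d : ℤ) (j : ℤ)) = 3 * Nat.choose (j - d + 1) 2) := by
  constructor
  · intro hj
    exact Aux.KZ_bot f d j (by omega)
  · intro h1 h2
    have hq : (j : ℤ) - d - 1 = ((j - d - 1 : ℕ) : ℤ) := by omega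
    have hm : (j - d - 1) + 1 < d := by omega
    rw [Aux.finrank_KZ hd hsq hf hm (j : ℤ) hq,
      show (j - d - 1) + 2 = j - d + 1 from by omega]

end
end

section
/- Let f = (xz − y²)³ − x²y⁴ ∈ S, and set ρ₁ = (2x², −xy, −2y² − 2xz) and ρ₂ = (6y³ − 18xyz, 3y²z + 3xz², 4y³ + 24yz²). Then ρ₁ and ρ₂ are syzygies of f (of degrees 2 and 3 respectively), and every syzygy of f can be written uniquely as g·ρ₁ + h·ρ₂ with g, h ∈ S; that is, the graded S-module AR(f) of all syzygies of f is free with basis ρ₁, ρ₂ (so the curve f = 0 is free with exponents (2,3)). -/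
open MvPolynomial

noncomputable section

set_option maxHeartbeats 2000000 in
/-- The curve `f = (xz - y²)³ - x²y⁴` is free with exponents `(2,3)`:
`ρ₁, ρ₂` are syzygies of degrees `2` and `3`, and every syzygy of `f` is uniquely
`g·ρ₁ + h·ρ₂`. -/
theorem stmt3 (f : P3) (hf : f = (X0 * X2 - X1 ^ 2) ^ 3 - X0 ^ 2 * X1 ^ 4)
    (r1 r2 : P3 × P3 × P3)
    (hr1 : r1 = (2 * X0 ^ 2, -(X0 * X1), -(2 * X1 ^ 2) - 2 * X0 * X2))
    (hr2 : r2 = (6 * X1 ^ 3 - 18 * X0 * X1 * X2, 3 * X1 ^ 2 * X2 + 3 * X0 * X2 ^ 2,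
      4 * X1 ^ 3 + 24 * X1 * X2 ^ 2)) :
    (r1.1.IsHomogeneous 2 ∧ r1.2.1.IsHomogeneous 2 ∧ r1.2.2.IsHomogeneous 2) ∧
    (r2.1.IsHomogeneous 3 ∧ r2.2.1.IsHomogeneous 3 ∧ r2.2.2.IsHomogeneous 3) ∧
    (r1.1 * pderiv 0 f + r1.2.1 * pderiv 1 f + r1.2.2 * pderiv 2 f = 0) ∧
    (r2.1 * pderiv 0 f + r2.2.1 * pderiv 1 f + r2.2.2 * pderiv 2 f = 0) ∧
    (∀ v : P3 × P3 × P3, v.1 * pderiv 0 f + v.2.1 * pderiv 1 f + v.2.2 * pderiv 2 f = 0 →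
      ∃! gh : P3 × P3, v = gh.1 • r1 + gh.2 • r2) := by
  subst hf; subst hr1; subst hr2
  have hdx : pderiv (0 : Fin 3) ((X0 * X2 - X1 ^ 2) ^ 3 - X0 ^ 2 * X1 ^ 4 : P3) = (3*X2*(X0*X2 - X1^2)^2 - 2*X0*X1^4) := by
    simp only [map_sub, pderiv_mul, pderiv_pow, pderiv_X_self,
      pderiv_X_of_ne (show (1:Fin 3) ≠ 0 by decide), pderiv_X_of_ne (show (2:Fin 3) ≠ 0 by decide)]
    ring
  have hdy : pderiv (1 : Fin 3) ((X0 * X2 - X1 ^ 2) ^ 3 - X0 ^ 2 * X1 ^ 4 : P3) = (-(6*X1*(X0*X2 - X1^2)^2) - 4*X0^2*X1^3) := by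
    simp only [map_sub, pderiv_mul, pderiv_pow, pderiv_X_self,
      pderiv_X_of_ne (show (0:Fin 3) ≠ 1 by decide), pderiv_X_of_ne (show (2:Fin 3) ≠ 1 by decide)]
    ring
  have hdz : pderiv (2 : Fin 3) ((X0 * X2 - X1 ^ 2) ^ 3 - X0 ^ 2 * X1 ^ 4 : P3) = (3*X0*(X0*X2 - X1^2)^2) := by
    simp only [map_sub, pderiv_mul, pderiv_pow, pderiv_X_self,
      pderiv_X_of_ne (show (0:Fin 3) ≠ 2 by decide), pderiv_X_of_ne (show (1:Fin 3) ≠ 2 by decide)]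
    ring
  have homN : ∀ (n : ℕ) [n.AtLeastTwo], ((OfNat.ofNat n : P3)).IsHomogeneous 0 := by
    intro n hn
    rw [← map_ofNat (C : ℂ →+* P3) n]
    exact isHomogeneous_C _ _
  have hfx0 : (3*X2*(X0*X2 - X1^2)^2 - 2*X0*X1^4) ≠ 0 := by
    intro hh
    have h2 := congrArg (eval (fun i : Fin 3 => if i = 1 then 0 else 1)) hh
    simp at h2
  have hfz0 : (3*X0*(X0*X2 - X1^2)^2) ≠ 0 := by
    intro hh
    have h2 := congrArg (eval (fun i : Fin 3 => if i = 1 then 0 else 1)) hh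
    simp at h2
  have hp10 : (2*X0^2) ≠ 0 := by
    intro hh
    have h2 := congrArg (eval (fun i : Fin 3 => if i = 1 then 0 else 1)) hh
    simp at h2
  have hXne : (X 1 : P3) ≠ 0 := X_ne_zero 1
  have hprime : Prime (X 1 : P3) := by
    let e : P3 ≃* Polynomial (MvPolynomial (Fin 2) ℂ) :=
      ((renameEquiv ℂ (Equiv.swap (1 : Fin 3) 0)).trans (finSuccEquiv ℂ 2)).toRingEquiv.toMulEquiv
    have he : e (X 1) = Polynomial.X := by
      show (finSuccEquiv ℂ 2) ((renameEquiv ℂ (Equiv.swap (1 : Fin 3) 0)) (X 1)) = Polynomial.X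
      rw [renameEquiv_apply, rename_X, Equiv.swap_apply_left, finSuccEquiv_X_zero]
    rw [← MulEquiv.prime_iff e, he]
    exact Polynomial.prime_X
  have hnd : ¬ (X 1 : P3) ∣ X0 ^ 4 * X2 ^ 4 := by
    rintro ⟨k, hk⟩
    have h2 := congrArg (eval (fun i : Fin 3 => if i = 1 then 0 else 1)) hk
    simp at h2
  have hC12 : (C (12⁻¹ : ℂ) : P3) * 12 = 1 := by
    rw [← map_ofNat (C : ℂ →+* P3) 12, ← C_mul]
    norm_num
  refine ⟨⟨?_, ?_, ?_⟩, ⟨?_, ?_, ?_⟩, ?_, ?_, ?_⟩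
  · simpa using (homN 2).mul (isHomogeneous_X_pow 0 2)
  · exact ((isHomogeneous_X ℂ 0).mul (isHomogeneous_X ℂ 1)).neg
  · have h1 : (-(2 * X1 ^ 2) : P3).IsHomogeneous 2 := by
      simpa using ((homN 2).mul (isHomogeneous_X_pow 1 2)).neg
    have h2 : (2 * X0 * X2 : P3).IsHomogeneous 2 := by
      simpa using ((homN 2).mul (isHomogeneous_X ℂ 0)).mul (isHomogeneous_X ℂ 2)
    exact h1.sub h2
  · have h1 : (6 * X1 ^ 3 : P3).IsHomogeneous 3 := by
      simpa using (homN 6).mul (isHomogeneous_X_pow 1 3)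
    have h2 : (18 * X0 * X1 * X2 : P3).IsHomogeneous 3 := by
      simpa using (((homN 18).mul (isHomogeneous_X ℂ 0)).mul (isHomogeneous_X ℂ 1)).mul
        (isHomogeneous_X ℂ 2)
    exact h1.sub h2
  · have h1 : (3 * X1 ^ 2 * X2 : P3).IsHomogeneous 3 := by
      simpa using ((homN 3).mul (isHomogeneous_X_pow 1 2)).mul (isHomogeneous_X ℂ 2)
    have h2 : (3 * X0 * X2 ^ 2 : P3).IsHomogeneous 3 := by
      simpa using ((homN 3).mul (isHomogeneous_X ℂ 0)).mul (isHomogeneous_X_pow 2 2)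
    exact h1.add h2
  · have h1 : (4 * X1 ^ 3 : P3).IsHomogeneous 3 := by
      simpa using (homN 4).mul (isHomogeneous_X_pow 1 3)
    have h2 : (24 * X1 * X2 ^ 2 : P3).IsHomogeneous 3 := by
      simpa using ((homN 24).mul (isHomogeneous_X ℂ 1)).mul (isHomogeneous_X_pow 2 2)
    exact h1.add h2
  · rw [hdx, hdy, hdz]; ring
  · rw [hdx, hdy, hdz]; ring
  rintro ⟨a, b, c⟩ hv
  rw [hdx, hdy, hdz] at hv
  replace hv : a * (3*X2*(X0*X2 - X1^2)^2 - 2*X0*X1^4) + b * (-(6*X1*(X0*X2 - X1^2)^2) - 4*X0^2*X1^3) + c * (3*X0*(X0*X2 - X1^2)^2) = 0 := hv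
  -- parallelism relations for w = v x rho2 and t = v x rho1
  have hw12 : (b*(4*X1^3 + 24*X1*X2^2) - c*(3*X1^2*X2 + 3*X0*X2^2)) * (-(6*X1*(X0*X2 - X1^2)^2) - 4*X0^2*X1^3) = (c*(6*X1^3 - 18*X0*X1*X2) - a*(4*X1^3 + 24*X1*X2^2)) * (3*X2*(X0*X2 - X1^2)^2 - 2*X0*X1^4) := by linear_combination (4*X1^3 + 24*X1*X2^2) * hv
  have hw13 : (b*(4*X1^3 + 24*X1*X2^2) - c*(3*X1^2*X2 + 3*X0*X2^2)) * (3*X0*(X0*X2 - X1^2)^2) = (a*(3*X1^2*X2 + 3*X0*X2^2) - b*(6*X1^3 - 18*X0*X1*X2)) * (3*X2*(X0*X2 - X1^2)^2 - 2*X0*X1^4) := by linear_combination (-(3*X1^2*X2 + 3*X0*X2^2)) * hv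
  have ht12 : (b*(-(2*X1^2) - 2*X0*X2) - c*(-(X0*X1))) * (-(6*X1*(X0*X2 - X1^2)^2) - 4*X0^2*X1^3) = (c*(2*X0^2) - a*(-(2*X1^2) - 2*X0*X2)) * (3*X2*(X0*X2 - X1^2)^2 - 2*X0*X1^4) := by linear_combination (-(2*X1^2) - 2*X0*X2) * hv
  have ht13 : (b*(-(2*X1^2) - 2*X0*X2) - c*(-(X0*X1))) * (3*X0*(X0*X2 - X1^2)^2) = (a*(-(X0*X1)) - b*(2*X0^2)) * (3*X2*(X0*X2 - X1^2)^2 - 2*X0*X1^4) := by linear_combination (-(-(X0*X1))) * hv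
  have hA : (-(6*X1^2*X2) + 9*X0*X2^2 + 2*X0*X1^2) * (3*X2*(X0*X2 - X1^2)^2 - 2*X0*X1^4) + (-(3*X1*X2^2) - X1^3) * (-(6*X1*(X0*X2 - X1^2)^2) - 4*X0^2*X1^3) + (-(9*X2^3) - 2*X1^2*X2) * (3*X0*(X0*X2 - X1^2)^2) = 6 * X1 ^ 8 := by ring
  have hA2 : (6*X1^2*X2 - 15*X0*X2^2 + 2*X0^2*X2) * (3*X2*(X0*X2 - X1^2)^2 - 2*X0*X1^4) + (3*X1*X2^2 - X0*X1*X2) * (-(6*X1*(X0*X2 - X1^2)^2) - 4*X0^2*X1^3) + (15*X2^3 + 2*X1^2*X2) * (3*X0*(X0*X2 - X1^2)^2) = 6 * X0 ^ 4 * X2 ^ 4 := by ring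
  -- the g-side
  have hWy : ((-(6*X1^2*X2) + 9*X0*X2^2 + 2*X0*X1^2)*(b*(4*X1^3 + 24*X1*X2^2) - c*(3*X1^2*X2 + 3*X0*X2^2)) + (-(3*X1*X2^2) - X1^3)*(c*(6*X1^3 - 18*X0*X1*X2) - a*(4*X1^3 + 24*X1*X2^2)) + (-(9*X2^3) - 2*X1^2*X2)*(a*(3*X1^2*X2 + 3*X0*X2^2) - b*(6*X1^3 - 18*X0*X1*X2))) * (3*X2*(X0*X2 - X1^2)^2 - 2*X0*X1^4) = 6 * X1 ^ 8 * (b*(4*X1^3 + 24*X1*X2^2) - c*(3*X1^2*X2 + 3*X0*X2^2)) := by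
    linear_combination (-(-(3*X1*X2^2) - X1^3)) * hw12 + (-(-(9*X2^3) - 2*X1^2*X2)) * hw13 + (b*(4*X1^3 + 24*X1*X2^2) - c*(3*X1^2*X2 + 3*X0*X2^2)) * hA
  have hWxz : ((6*X1^2*X2 - 15*X0*X2^2 + 2*X0^2*X2)*(b*(4*X1^3 + 24*X1*X2^2) - c*(3*X1^2*X2 + 3*X0*X2^2)) + (3*X1*X2^2 - X0*X1*X2)*(c*(6*X1^3 - 18*X0*X1*X2) - a*(4*X1^3 + 24*X1*X2^2)) + (15*X2^3 + 2*X1^2*X2)*(a*(3*X1^2*X2 + 3*X0*X2^2) - b*(6*X1^3 - 18*X0*X1*X2))) * (3*X2*(X0*X2 - X1^2)^2 - 2*X0*X1^4) = 6 * X0 ^ 4 * X2 ^ 4 * (b*(4*X1^3 + 24*X1*X2^2) - c*(3*X1^2*X2 + 3*X0*X2^2)) := by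
    linear_combination (-(3*X1*X2^2 - X0*X1*X2)) * hw12 + (-(15*X2^3 + 2*X1^2*X2)) * hw13 + (b*(4*X1^3 + 24*X1*X2^2) - c*(3*X1^2*X2 + 3*X0*X2^2)) * hA2
  have hcross : ((-(6*X1^2*X2) + 9*X0*X2^2 + 2*X0*X1^2)*(b*(4*X1^3 + 24*X1*X2^2) - c*(3*X1^2*X2 + 3*X0*X2^2)) + (-(3*X1*X2^2) - X1^3)*(c*(6*X1^3 - 18*X0*X1*X2) - a*(4*X1^3 + 24*X1*X2^2)) + (-(9*X2^3) - 2*X1^2*X2)*(a*(3*X1^2*X2 + 3*X0*X2^2) - b*(6*X1^3 - 18*X0*X1*X2))) * (X0 ^ 4 * X2 ^ 4) = X1 ^ 8 * ((6*X1^2*X2 - 15*X0*X2^2 + 2*X0^2*X2)*(b*(4*X1^3 + 24*X1*X2^2) - c*(3*X1^2*X2 + 3*X0*X2^2)) + (3*X1*X2^2 - X0*X1*X2)*(c*(6*X1^3 - 18*X0*X1*X2) - a*(4*X1^3 + 24*X1*X2^2)) + (15*X2^3 + 2*X1^2*X2)*(a*(3*X1^2*X2 + 3*X0*X2^2) - b*(6*X1^3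 - 18*X0*X1*X2))) := by
    apply mul_right_cancel₀ hfx0
    linear_combination (X0 ^ 4 * X2 ^ 4) * hWy - X1 ^ 8 * hWxz
  obtain ⟨g6, hg6⟩ : (X 1 : P3) ^ 8 ∣ ((-(6*X1^2*X2) + 9*X0*X2^2 + 2*X0*X1^2)*(b*(4*X1^3 + 24*X1*X2^2) - c*(3*X1^2*X2 + 3*X0*X2^2)) + (-(3*X1*X2^2) - X1^3)*(c*(6*X1^3 - 18*X0*X1*X2) - a*(4*X1^3 + 24*X1*X2^2)) + (-(9*X2^3) - 2*X1^2*X2)*(a*(3*X1^2*X2 + 3*X0*X2^2) - b*(6*X1^3 - 18*X0*X1*X2))) :=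
    hprime.pow_dvd_of_dvd_mul_right 8 hnd ⟨((6*X1^2*X2 - 15*X0*X2^2 + 2*X0^2*X2)*(b*(4*X1^3 + 24*X1*X2^2) - c*(3*X1^2*X2 + 3*X0*X2^2)) + (3*X1*X2^2 - X0*X1*X2)*(c*(6*X1^3 - 18*X0*X1*X2) - a*(4*X1^3 + 24*X1*X2^2)) + (15*X2^3 + 2*X1^2*X2)*(a*(3*X1^2*X2 + 3*X0*X2^2) - b*(6*X1^3 - 18*X0*X1*X2))), hcross⟩
  have h6g : (6 : P3) * (b*(4*X1^3 + 24*X1*X2^2) - c*(3*X1^2*X2 + 3*X0*X2^2)) = g6 * (3*X2*(X0*X2 - X1^2)^2 - 2*X0*X1^4) := by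
    apply mul_left_cancel₀ (pow_ne_zero 8 hXne)
    linear_combination (3*X2*(X0*X2 - X1^2)^2 - 2*X0*X1^4) * hg6 - hWy
  have hwg1 : (b*(4*X1^3 + 24*X1*X2^2) - c*(3*X1^2*X2 + 3*X0*X2^2)) = 2 * ((C (12⁻¹ : ℂ) : P3) * g6) * (3*X2*(X0*X2 - X1^2)^2 - 2*X0*X1^4) := by
    linear_combination (2 * (C (12⁻¹ : ℂ) : P3)) * h6g - (b*(4*X1^3 + 24*X1*X2^2) - c*(3*X1^2*X2 + 3*X0*X2^2)) * hC12
  have hwg2 : (c*(6*X1^3 - 18*X0*X1*X2) - a*(4*X1^3 + 24*X1*X2^2)) = 2 * ((C (12⁻¹ : ℂ) : P3) * g6) * (-(6*X1*(X0*X2 - X1^2)^2) - 4*X0^2*X1^3) := by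
    apply mul_right_cancel₀ hfx0
    linear_combination (-(6*X1*(X0*X2 - X1^2)^2) - 4*X0^2*X1^3) * hwg1 - hw12
  have hwg3 : (a*(3*X1^2*X2 + 3*X0*X2^2) - b*(6*X1^3 - 18*X0*X1*X2)) = 2 * ((C (12⁻¹ : ℂ) : P3) * g6) * (3*X0*(X0*X2 - X1^2)^2) := by
    apply mul_right_cancel₀ hfx0
    linear_combination (3*X0*(X0*X2 - X1^2)^2) * hwg1 - hw13
  -- the h-side
  have hTy : ((-(6*X1^2*X2) + 9*X0*X2^2 + 2*X0*X1^2)*(b*(-(2*X1^2) - 2*X0*X2) - c*(-(X0*X1))) + (-(3*X1*X2^2) - X1^3)*(c*(2*X0^2) - a*(-(2*X1^2) - 2*X0*X2)) + (-(9*X2^3) - 2*X1^2*X2)*(a*(-(X0*X1)) - b*(2*X0^2))) * (3*X2*(X0*X2 - X1^2)^2 - 2*X0*X1^4) = 6 * X1 ^ 8 * (b*(-(2*X1^2) - 2*X0*X2) - c*(-(X0*X1))) := by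
    linear_combination (-(-(3*X1*X2^2) - X1^3)) * ht12 + (-(-(9*X2^3) - 2*X1^2*X2)) * ht13 + (b*(-(2*X1^2) - 2*X0*X2) - c*(-(X0*X1))) * hA
  have hTxz : ((6*X1^2*X2 - 15*X0*X2^2 + 2*X0^2*X2)*(b*(-(2*X1^2) - 2*X0*X2) - c*(-(X0*X1))) + (3*X1*X2^2 - X0*X1*X2)*(c*(2*X0^2) - a*(-(2*X1^2) - 2*X0*X2)) + (15*X2^3 + 2*X1^2*X2)*(a*(-(X0*X1)) - b*(2*X0^2))) * (3*X2*(X0*X2 - X1^2)^2 - 2*X0*X1^4) = 6 * X0 ^ 4 * X2 ^ 4 * (b*(-(2*X1^2) - 2*X0*X2) - c*(-(X0*X1))) := by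
    linear_combination (-(3*X1*X2^2 - X0*X1*X2)) * ht12 + (-(15*X2^3 + 2*X1^2*X2)) * ht13 + (b*(-(2*X1^2) - 2*X0*X2) - c*(-(X0*X1))) * hA2
  have hcrossT : ((-(6*X1^2*X2) + 9*X0*X2^2 + 2*X0*X1^2)*(b*(-(2*X1^2) - 2*X0*X2) - c*(-(X0*X1))) + (-(3*X1*X2^2) - X1^3)*(c*(2*X0^2) - a*(-(2*X1^2) - 2*X0*X2)) + (-(9*X2^3) - 2*X1^2*X2)*(a*(-(X0*X1)) - b*(2*X0^2))) * (X0 ^ 4 * X2 ^ 4) = X1 ^ 8 * ((6*X1^2*X2 - 15*X0*X2^2 + 2*X0^2*X2)*(b*(-(2*X1^2) - 2*X0*X2) - c*(-(X0*X1))) + (3*X1*X2^2 - X0*X1*X2)*(c*(2*X0^2) - a*(-(2*X1^2) - 2*X0*X2)) + (15*X2^3 + 2*X1^2*X2)*(a*(-(X0*X1)) - b*(2*X0^2))) := by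
    apply mul_right_cancel₀ hfx0
    linear_combination (X0 ^ 4 * X2 ^ 4) * hTy - X1 ^ 8 * hTxz
  obtain ⟨h6, hh6⟩ : (X 1 : P3) ^ 8 ∣ ((-(6*X1^2*X2) + 9*X0*X2^2 + 2*X0*X1^2)*(b*(-(2*X1^2) - 2*X0*X2) - c*(-(X0*X1))) + (-(3*X1*X2^2) - X1^3)*(c*(2*X0^2) - a*(-(2*X1^2) - 2*X0*X2)) + (-(9*X2^3) - 2*X1^2*X2)*(a*(-(X0*X1)) - b*(2*X0^2))) :=
    hprime.pow_dvd_of_dvd_mul_right 8 hnd ⟨((6*X1^2*X2 - 15*X0*X2^2 + 2*X0^2*X2)*(b*(-(2*X1^2) - 2*X0*X2) - c*(-(X0*X1))) + (3*X1*X2^2 - X0*X1*X2)*(c*(2*X0^2) - a*(-(2*X1^2) - 2*X0*X2)) + (15*X2^3 + 2*X1^2*X2)*(a*(-(X0*X1)) - b*(2*X0^2))), hcrossT⟩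
  have h6h : (6 : P3) * (b*(-(2*X1^2) - 2*X0*X2) - c*(-(X0*X1))) = h6 * (3*X2*(X0*X2 - X1^2)^2 - 2*X0*X1^4) := by
    apply mul_left_cancel₀ (pow_ne_zero 8 hXne)
    linear_combination (3*X2*(X0*X2 - X1^2)^2 - 2*X0*X1^4) * hh6 - hTy
  have hth1 : (b*(-(2*X1^2) - 2*X0*X2) - c*(-(X0*X1))) = -(2 * (-((C (12⁻¹ : ℂ) : P3) * h6)) * (3*X2*(X0*X2 - X1^2)^2 - 2*X0*X1^4)) := by
    linear_combination (2 * (C (12⁻¹ : ℂ) : P3)) * h6h - (b*(-(2*X1^2) - 2*X0*X2) - c*(-(X0*X1))) * hC12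
  have hth2 : (c*(2*X0^2) - a*(-(2*X1^2) - 2*X0*X2)) = -(2 * (-((C (12⁻¹ : ℂ) : P3) * h6)) * (-(6*X1*(X0*X2 - X1^2)^2) - 4*X0^2*X1^3)) := by
    apply mul_right_cancel₀ hfx0
    linear_combination (-(6*X1*(X0*X2 - X1^2)^2) - 4*X0^2*X1^3) * hth1 - ht12
  have hth3 : (a*(-(X0*X1)) - b*(2*X0^2)) = -(2 * (-((C (12⁻¹ : ℂ) : P3) * h6)) * (3*X0*(X0*X2 - X1^2)^2)) := by
    apply mul_right_cancel₀ hfx0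
    linear_combination (3*X0*(X0*X2 - X1^2)^2) * hth1 - ht13
  have h2fx : (2 * (3*X2*(X0*X2 - X1^2)^2 - 2*X0*X1^4) : P3) ≠ 0 := mul_ne_zero two_ne_zero hfx0
  have ea : a = ((C (12⁻¹ : ℂ) : P3) * g6) * (2*X0^2) + (-((C (12⁻¹ : ℂ) : P3) * h6)) * (6*X1^3 - 18*X0*X1*X2) := by
    apply mul_right_cancel₀ h2fx
    linear_combination (2*X0^2) * hwg1 + (4*X1^3 + 24*X1*X2^2) * hth3 + (3*X1^2*X2 + 3*X0*X2^2) * hth2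
  have eb : b = ((C (12⁻¹ : ℂ) : P3) * g6) * (-(X0*X1)) + (-((C (12⁻¹ : ℂ) : P3) * h6)) * (3*X1^2*X2 + 3*X0*X2^2) := by
    apply mul_right_cancel₀ h2fx
    linear_combination (-(X0*X1)) * hwg1 - (3*X1^2*X2 + 3*X0*X2^2) * hth1
  have ec : c = ((C (12⁻¹ : ℂ) : P3) * g6) * (-(2*X1^2) - 2*X0*X2) + (-((C (12⁻¹ : ℂ) : P3) * h6)) * (4*X1^3 + 24*X1*X2^2) := by
    apply mul_right_cancel₀ h2fx
    linear_combination (-(2*X1^2) - 2*X0*X2) * hwg1 - (4*X1^3 + 24*X1*X2^2) * hth1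
  refine ⟨(((C (12⁻¹ : ℂ) : P3) * g6), (-((C (12⁻¹ : ℂ) : P3) * h6))), ?_, ?_⟩
  · show ((a, b, c) : P3 × P3 × P3) =
      (((C (12⁻¹ : ℂ) : P3) * g6) * (2*X0^2) + (-((C (12⁻¹ : ℂ) : P3) * h6)) * (6*X1^3 - 18*X0*X1*X2), ((C (12⁻¹ : ℂ) : P3) * g6) * (-(X0*X1)) + (-((C (12⁻¹ : ℂ) : P3) * h6)) * (3*X1^2*X2 + 3*X0*X2^2), ((C (12⁻¹ : ℂ) : P3) * g6) * (-(2*X1^2) - 2*X0*X2) + (-((C (12⁻¹ : ℂ) : P3) * h6)) * (4*X1^3 + 24*X1*X2^2))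
    simp only [Prod.mk.injEq]
    exact ⟨ea, eb, ec⟩
  · rintro ⟨g', h'⟩ hgh'
    replace hgh' : ((a, b, c) : P3 × P3 × P3) =
        (g' * (2*X0^2) + h' * (6*X1^3 - 18*X0*X1*X2), g' * (-(X0*X1)) + h' * (3*X1^2*X2 + 3*X0*X2^2), g' * (-(2*X1^2) - 2*X0*X2) + h' * (4*X1^3 + 24*X1*X2^2)) := hgh'
    simp only [Prod.mk.injEq] at hgh'
    obtain ⟨e1, e2, e3⟩ := hgh'
    have hH : h' = (-((C (12⁻¹ : ℂ) : P3) * h6)) := by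
      apply mul_right_cancel₀ (mul_ne_zero two_ne_zero hfz0)
      linear_combination (-(X0*X1)) * e1 - (2*X0^2) * e2 + (2*X0^2) * eb - (-(X0*X1)) * ea
    have hG : g' = ((C (12⁻¹ : ℂ) : P3) * g6) := by
      apply mul_right_cancel₀ hp10
      linear_combination ea - e1 - (6*X1^3 - 18*X0*X1*X2) * hH
    simp only [Prod.mk.injEq]
    exact ⟨hG, hH⟩

end
end

section
/- Let f = x⁶ + y⁶ + z⁶ − 2(x³y³ + x³z³ + y³z³) ∈ S (the sextic with 9 cusps), and set ρ₁ = (y³ − z³, x²y, −x²z), ρ₂ = (xy², x³ − z³, −y²z), ρ₃ = (xz², −yz², x³ − y³). Then: (i) ρ₁, ρ₂, ρ₃ are syzygies of f of degree 3; (ii) every syzygy of f is an S-linear combination g₁ρ₁ + g₂ρ₂ + g₃ρ₃; (iii) x·ρ₁ − y·ρ₂ + z·ρ₃ = 0; and (iv) every triple (g₁, g₂, g₃) ∈ S³ with g₁ρ₁ + g₂ρ₂ + g₃ρ₃ = 0 is of the form (hx, −hy, hz) for some h ∈ S. (Thus f is nearly free with exponents (3,3).) -/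
open MvPolynomial

set_option maxHeartbeats 2000000

noncomputable section

lemma primeX (i : Fin 3) : Prime (X i : P3) := by
  have h := (MulEquiv.prime_iff ((renameEquiv ℂ (Equiv.swap i 0)).trans (finSuccEquiv ℂ 2)).toMulEquiv
    (p := (X i : P3))).symm
  rw [h]
  have : ((renameEquiv ℂ (Equiv.swap i 0)).trans (finSuccEquiv ℂ 2)).toMulEquiv (X i : P3)
      = Polynomial.X := by
    show ((renameEquiv ℂ (Equiv.swap i 0)).trans (finSuccEquiv ℂ 2)) (X i : P3) = Polynomial.X
    rw [AlgEquiv.trans_apply, renameEquiv_apply, rename_X, Equiv.swap_apply_left,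
      finSuccEquiv_X_zero]
  rw [this]
  exact Polynomial.prime_X

lemma notdvd (i : Fin 3) (g : P3) (u : Fin 3 → ℂ) (h0 : u i = 0)
    (h1 : aeval u g ≠ 0) : ¬ (X i : P3) ∣ g := by
  rintro ⟨t, rfl⟩
  apply h1
  simp [h0]

abbrev Q2 : Type := MvPolynomial (Fin 2) ℂ

abbrev ee : P3 ≃ₐ[ℂ] Polynomial Q2 := finSuccEquiv ℂ 2

lemma ee_X1 : ee X1 = Polynomial.C (X 0 : Q2) := by
  have : (X1 : P3) = X (Fin.succ 0) := rfl
  rw [this, finSuccEquiv_X_succ]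

lemma ee_X2 : ee X2 = Polynomial.C (X 1 : Q2) := by
  have : (X2 : P3) = X (Fin.succ 1) := rfl
  rw [this, finSuccEquiv_X_succ]

lemma mem_iff (G : P3) : G ∈ Ideal.span {(X1:P3)^3, (X2:P3)^3} ↔
    ∀ n, ((ee G).coeff n) ∈ Ideal.span {(X 0 : Q2)^3, (X 1 : Q2)^3} := by
  constructor
  · intro h n
    obtain ⟨u, v, huv⟩ := Ideal.mem_span_pair.mp h
    have : ee G = ee u * Polynomial.C ((X 0 : Q2)^3) + ee v * Polynomial.C ((X 1 : Q2)^3) := by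
      rw [← huv]
      simp only [map_add, map_mul, map_pow, ee_X1, ee_X2, Polynomial.C_pow]
    rw [this]
    rw [Polynomial.coeff_add, Polynomial.coeff_mul_C, Polynomial.coeff_mul_C]
    exact Ideal.add_mem _ (Ideal.mul_mem_left _ _ (Ideal.subset_span (by simp)))
      (Ideal.mul_mem_left _ _ (Ideal.subset_span (by simp)))
  · intro h
    have h1 : ee G ∈ Ideal.map (Polynomial.C) (Ideal.span {(X 0 : Q2)^3, (X 1 : Q2)^3}) :=
      Ideal.mem_map_C_iff.mpr h
    rw [Ideal.map_span, Set.image_pair] at h1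
    obtain ⟨U, V, hUV⟩ := Ideal.mem_span_pair.mp h1
    have : G = ee.symm U * X1^3 + ee.symm V * X2^3 := by
      apply ee.injective
      rw [map_add, map_mul, map_mul, map_pow, map_pow, ee_X1, ee_X2,
        AlgEquiv.apply_symm_apply, AlgEquiv.apply_symm_apply, ← Polynomial.C_pow,
        ← Polynomial.C_pow, hUV]
    rw [this]
    exact Ideal.add_mem _ (Ideal.mul_mem_left _ _ (Ideal.subset_span (by simp)))
      (Ideal.mul_mem_left _ _ (Ideal.subset_span (by simp)))

lemma reg (G : P3) (h : G * X0^3 ∈ Ideal.span {(X1:P3)^3, (X2:P3)^3}) :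
    G ∈ Ideal.span {(X1:P3)^3, (X2:P3)^3} := by
  rw [mem_iff] at h ⊢
  intro n
  have h3 : ee (G * X0^3) = ee G * Polynomial.X ^ 3 := by
    rw [map_mul, map_pow, finSuccEquiv_X_zero]
  have := h (n + 3)
  rwa [h3, Polynomial.coeff_mul_X_pow] at this

lemma K3 (P Q R : P3) (h : P * X0^3 + Q * X1^3 + R * X2^3 = 0) :
    ∃ p q r : P3, P = p * X1^3 + q * X2^3 ∧ Q = -(p * X0^3) + r * X2^3 ∧
      R = -(q * X0^3) - r * X1^3 := by
  have hmem : P * X0^3 ∈ Ideal.span {(X1:P3)^3, (X2:P3)^3} :=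
    Ideal.mem_span_pair.mpr ⟨-Q, -R, by linear_combination -h⟩
  obtain ⟨p, q, hpq⟩ := Ideal.mem_span_pair.mp (reg P hmem)
  have h2 : (Q + p * X0^3) * X1^3 + (R + q * X0^3) * X2^3 = 0 := by
    linear_combination h + X0^3 * hpq
  have hz : (X2:P3)^3 ∣ (Q + p * X0^3) := by
    have hd : (X2:P3)^3 ∣ (Q + p * X0^3) * X1^3 :=
      ⟨-(R + q * X0^3), by linear_combination h2⟩
    refine (primeX 2).pow_dvd_of_dvd_mul_right 3 (fun hdd => ?_) hd
    exact (notdvd 2 X1 ![0,1,0] rfl (by simp)) ((primeX 2).dvd_of_dvd_pow hdd)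
  obtain ⟨r, hr⟩ := hz
  refine ⟨p, q, r, by linear_combination -hpq, by linear_combination hr, ?_⟩
  have h3 : (X2:P3)^3 * (R + q * X0^3 + r * X1^3) = 0 := by
    linear_combination h2 - X1^3 * hr
  rcases mul_eq_zero.mp h3 with h4 | h4
  · exact absurd h4 (pow_ne_zero 3 (X_ne_zero _))
  · linear_combination h4

lemma twoC : (2 : P3) = C (2:ℂ) := by
  rw [map_ofNat (C : ℂ →+* P3) 2]

/-- The sextic with nine cusps `f = x⁶+y⁶+z⁶-2(x³y³+x³z³+y³z³)` is nearly free with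
exponents `(3,3)`: `ρ₁, ρ₂, ρ₃` are degree-3 syzygies generating `AR(f)`, with the
second-order syzygy `x·ρ₁ - y·ρ₂ + z·ρ₃ = 0` generating all relations among them. -/
theorem stmt6 (f : P3)
    (hf : f = X0 ^ 6 + X1 ^ 6 + X2 ^ 6
      - 2 * (X0 ^ 3 * X1 ^ 3 + X0 ^ 3 * X2 ^ 3 + X1 ^ 3 * X2 ^ 3))
    (r1 r2 r3 : P3 × P3 × P3)
    (hr1 : r1 = (X1 ^ 3 - X2 ^ 3, X0 ^ 2 * X1, -(X0 ^ 2 * X2)))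
    (hr2 : r2 = (X0 * X1 ^ 2, X0 ^ 3 - X2 ^ 3, -(X1 ^ 2 * X2)))
    (hr3 : r3 = (X0 * X2 ^ 2, -(X1 * X2 ^ 2), X0 ^ 3 - X1 ^ 3)) :
    (r1.1.IsHomogeneous 3 ∧ r1.2.1.IsHomogeneous 3 ∧ r1.2.2.IsHomogeneous 3) ∧
    (r2.1.IsHomogeneous 3 ∧ r2.2.1.IsHomogeneous 3 ∧ r2.2.2.IsHomogeneous 3) ∧
    (r3.1.IsHomogeneous 3 ∧ r3.2.1.IsHomogeneous 3 ∧ r3.2.2.IsHomogeneous 3) ∧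
    (r1.1 * pderiv 0 f + r1.2.1 * pderiv 1 f + r1.2.2 * pderiv 2 f = 0) ∧ (r2.1 * pderiv 0 f + r2.2.1 * pderiv 1 f + r2.2.2 * pderiv 2 f = 0) ∧ (r3.1 * pderiv 0 f + r3.2.1 * pderiv 1 f + r3.2.2 * pderiv 2 f = 0) ∧
    (∀ v : P3 × P3 × P3, v.1 * pderiv 0 f + v.2.1 * pderiv 1 f + v.2.2 * pderiv 2 f = 0 →
      ∃ g1 g2 g3 : P3, v = g1 • r1 + g2 • r2 + g3 • r3) ∧
    (X0 • r1 - X1 • r2 + X2 • r3 = 0) ∧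
    (∀ g1 g2 g3 : P3, g1 • r1 + g2 • r2 + g3 • r3 = 0 →
      ∃ h : P3, g1 = h * X0 ∧ g2 = -(h * X1) ∧ g3 = h * X2) := by
  have hX : ∀ i : Fin 3, (X i : P3).IsHomogeneous 1 := fun i => isHomogeneous_X ℂ i
  have hfx : pderiv 0 f = 6*X0^5 - 6*X0^2*X1^3 - 6*X0^2*X2^3 := by
    subst hf; rw [twoC]
    simp [pderiv_X, Finsupp.single_eq_pi_single, Derivation.leibniz_pow, Derivation.leibniz]
    rw [← twoC]; ring
  have hfy : pderiv 1 f = 6*X1^5 - 6*X0^3*X1^2 - 6*X1^2*X2^3 := by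
    subst hf; rw [twoC]
    simp [pderiv_X, Finsupp.single_eq_pi_single, Derivation.leibniz_pow, Derivation.leibniz]
    rw [← twoC]; ring
  have hfz : pderiv 2 f = 6*X2^5 - 6*X0^3*X2^2 - 6*X1^3*X2^2 := by
    subst hf; rw [twoC]
    simp [pderiv_X, Finsupp.single_eq_pi_single, Derivation.leibniz_pow, Derivation.leibniz]
    rw [← twoC]; ring
  have hhalf : (C (2⁻¹:ℂ) * 2 : P3) = 1 := by rw [twoC, ← C_mul]; norm_num
  subst hr1 hr2 hr3
  refine ⟨⟨?_, ?_, ?_⟩, ⟨?_, ?_, ?_⟩, ⟨?_, ?_, ?_⟩, ?_, ?_, ?_, ?_, ?_, ?_⟩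
  · exact ((hX 1).pow 3).sub (by simpa using (hX 2).pow 3)
  · simpa using ((hX 0).pow 2).mul (hX 1)
  · exact (by simpa using ((hX 0).pow 2).mul (hX 2) : (_ : P3).IsHomogeneous 3).neg
  · simpa using (hX 0).mul ((hX 1).pow 2)
  · exact ((hX 0).pow 3).sub (by simpa using (hX 2).pow 3)
  · exact (by simpa using ((hX 1).pow 2).mul (hX 2) : (_ : P3).IsHomogeneous 3).neg
  · simpa using (hX 0).mul ((hX 2).pow 2)
  · exact (by simpa using (hX 1).mul ((hX 2).pow 2) : (_ : P3).IsHomogeneous 3).neg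
  · exact ((hX 0).pow 3).sub (by simpa using (hX 1).pow 3)
  · show (X1^3 - X2^3) * pderiv 0 f + (X0^2*X1) * pderiv 1 f + (-(X0^2*X2)) * pderiv 2 f = 0
    rw [hfx, hfy, hfz]; ring
  · show (X0*X1^2) * pderiv 0 f + (X0^3 - X2^3) * pderiv 1 f + (-(X1^2*X2)) * pderiv 2 f = 0
    rw [hfx, hfy, hfz]; ring
  · show (X0*X2^2) * pderiv 0 f + (-(X1*X2^2)) * pderiv 1 f + (X0^3 - X1^3) * pderiv 2 f = 0
    rw [hfx, hfy, hfz]; ring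
  · -- surjectivity
    intro v hv
    rw [hfx, hfy, hfz] at hv
    have h6 : (6:P3) ≠ 0 := fun hc => by
      simpa using congrArg (aeval (fun _ => (0:ℂ))) hc
    have hK6 : (6:P3) * ((v.1*X0^2 - v.2.1*X1^2 - v.2.2*X2^2) * X0^3
        + (-(v.1*X0^2) + v.2.1*X1^2 - v.2.2*X2^2) * X1^3
        + (-(v.1*X0^2) - v.2.1*X1^2 + v.2.2*X2^2) * X2^3) = 0 := by
      linear_combination hv
    have hK := (mul_eq_zero.mp hK6).resolve_left h6
    obtain ⟨p, q, r, hP, hQ, hR⟩ := K3 _ _ _ hK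
    obtain ⟨r₁, hr₁⟩ : (X0:P3)^2 ∣ r := by
      have hd : (X0:P3)^2 ∣ r * (X1^3 - X2^3) :=
        ⟨2*v.1 - (p+q)*X0, by linear_combination hQ + hR⟩
      exact (primeX 0).pow_dvd_of_dvd_mul_right 2
        (notdvd 0 (X1^3 - X2^3) ![0,1,0] rfl (by simp)) hd
    obtain ⟨q₁, hq₁⟩ : (X1:P3)^2 ∣ q := by
      have hd : (X1:P3)^2 ∣ q * (X0^3 - X2^3) :=
        ⟨2*v.2.1 + (p-r)*X1, by linear_combination hP + hR⟩
      exact (primeX 1).pow_dvd_of_dvd_mul_right 2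
        (notdvd 1 (X0^3 - X2^3) ![1,0,0] rfl (by simp)) hd
    obtain ⟨p₁, hp₁⟩ : (X2:P3)^2 ∣ p := by
      have hd : (X2:P3)^2 ∣ p * (X0^3 - X1^3) :=
        ⟨2*v.2.2 + (q+r)*X2, by linear_combination hP + hQ⟩
      exact (primeX 2).pow_dvd_of_dvd_mul_right 2
        (notdvd 2 (X0^3 - X1^3) ![1,0,0] rfl (by simp)) hd
    refine ⟨C (2⁻¹:ℂ) * r₁, C (2⁻¹:ℂ) * q₁, C (2⁻¹:ℂ) * p₁, ?_⟩
    have e1 : v.1 = C (2⁻¹:ℂ) * r₁ * (X1^3 - X2^3) + C (2⁻¹:ℂ) * q₁ * (X0*X1^2)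
        + C (2⁻¹:ℂ) * p₁ * (X0*X2^2) := by
      apply mul_left_cancel₀ (pow_ne_zero 2 (X_ne_zero (0 : Fin 3)))
      linear_combination (-(C (2⁻¹:ℂ))) * hQ + (-(C (2⁻¹:ℂ))) * hR
        + (C (2⁻¹:ℂ)) * (X1^3 - X2^3) * hr₁ + (C (2⁻¹:ℂ)) * X0^3 * hq₁
        + (C (2⁻¹:ℂ)) * X0^3 * hp₁ - (v.1 * X0^2) * hhalf
    have e2 : v.2.1 = C (2⁻¹:ℂ) * r₁ * (X0^2*X1) + C (2⁻¹:ℂ) * q₁ * (X0^3 - X2^3)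
        + C (2⁻¹:ℂ) * p₁ * (-(X1*X2^2)) := by
      apply mul_left_cancel₀ (pow_ne_zero 2 (X_ne_zero (1 : Fin 3)))
      linear_combination (-(C (2⁻¹:ℂ))) * hP + (-(C (2⁻¹:ℂ))) * hR
        + (C (2⁻¹:ℂ)) * X1^3 * hr₁ - (C (2⁻¹:ℂ)) * X1^3 * hp₁
        + (C (2⁻¹:ℂ)) * (X0^3 - X2^3) * hq₁ - (v.2.1 * X1^2) * hhalf
    have e3 : v.2.2 = C (2⁻¹:ℂ) * r₁ * (-(X0^2*X2)) + C (2⁻¹:ℂ) * q₁ * (-(X1^2*X2))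
        + C (2⁻¹:ℂ) * p₁ * (X0^3 - X1^3) := by
      apply mul_left_cancel₀ (pow_ne_zero 2 (X_ne_zero (2 : Fin 3)))
      linear_combination (-(C (2⁻¹:ℂ))) * hP + (-(C (2⁻¹:ℂ))) * hQ
        + (C (2⁻¹:ℂ)) * (X0^3 - X1^3) * hp₁ - (C (2⁻¹:ℂ)) * X2^3 * hq₁
        - (C (2⁻¹:ℂ)) * X2^3 * hr₁ - (v.2.2 * X2^2) * hhalf
    have : v = (v.1, v.2.1, v.2.2) := rfl
    rw [this, e1, e2, e3]
    simp only [Prod.smul_mk, smul_eq_mul, Prod.mk_add_mk]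
  · -- second order syzygy
    simp only [Prod.smul_mk, smul_eq_mul, Prod.mk_add_mk, Prod.mk_sub_mk, Prod.mk_eq_zero]
    refine ⟨by ring, by ring, by ring⟩
  · -- relations
    intro g1 g2 g3 hrel
    simp only [Prod.smul_mk, smul_eq_mul, Prod.mk_add_mk, Prod.mk_eq_zero] at hrel
    obtain ⟨h1, h2, h3⟩ := hrel
    obtain ⟨h, hg1⟩ : (X0:P3) ∣ g1 := by
      have hd : (X0:P3) ∣ g1 * (X1^3 - X2^3) :=
        ⟨-(g2*X1^2) - g3*X2^2, by linear_combination h1⟩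
      exact ((primeX 0).dvd_or_dvd hd).resolve_right
        (notdvd 0 (X1^3 - X2^3) ![0,1,0] rfl (by simp))
    have hE : h*(X1^3 - X2^3) + g2*X1^2 + g3*X2^2 = 0 := by
      have hx : (X0:P3) * (h*(X1^3 - X2^3) + g2*X1^2 + g3*X2^2) = 0 := by
        linear_combination h1 - (X1^3 - X2^3) * hg1
      exact (mul_eq_zero.mp hx).resolve_left (X_ne_zero _)
    obtain ⟨k, hk⟩ : (X2:P3)^2 ∣ (g2 + h*X1) := by
      have hd : (X2:P3)^2 ∣ (g2 + h*X1) * X1^2 := ⟨h*X2 - g3, by linear_combination hE⟩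
      exact (primeX 2).pow_dvd_of_dvd_mul_right 2
        (fun hdd => notdvd 2 X1 ![0,1,0] rfl (by simp) ((primeX 2).dvd_of_dvd_pow hdd)) hd
    have hg3 : g3 = h*X2 - k*X1^2 := by
      have hzz : (X2:P3)^2 * (h*X2 - k*X1^2 - g3) = 0 := by
        linear_combination X1^2 * hk - hE
      have := (mul_eq_zero.mp hzz).resolve_left (pow_ne_zero 2 (X_ne_zero _))
      linear_combination -this
    have hk0 : k = 0 := by
      have hzz : (X2^2*(X0^3 + X1^3 - X2^3) : P3) * k = 0 := by
        linear_combination h2 - (X0^2*X1)*hg1 - (X0^3 - X2^3)*hk + (X1*X2^2)*hg3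
      refine (mul_eq_zero.mp hzz).resolve_left (mul_ne_zero (pow_ne_zero 2 (X_ne_zero _)) ?_)
      intro hc
      simpa using congrArg (aeval (fun i => if i = 0 then (1:ℂ) else 0)) hc
    exact ⟨h, by linear_combination hg1, by linear_combination hk + X2^2*hk0,
      by linear_combination hg3 - X1^2*hk0⟩

end
end

section
/- Let m ≥ 2 be an integer and let f = (x^m − y^m)(x^m − z^m)(y^m − z^m) ∈ S. Set ρ₁ = (x^{m+1} − 2xy^m − 2xz^m, y^{m+1} − 2yz^m − 2yx^m, z^{m+1} − 2zx^m − 2zy^m) and ρ₂ = (y^{m−1}z^{m−1}, x^{m−1}z^{m−1}, x^{m−1}y^{m−1}). Then: (i) ρ₁ and ρ₂ are syzygies of f, i.e., their components (a,b,c) satisfy a f_x + b f_y + c f_z = 0; (ii) the divergence of ρ₂ vanishes: ∂_x(y^{m−1}z^{m−1}) + ∂_y(x^{m−1}z^{m−1}) + ∂_z(x^{m−1}y^{m−1}) = 0; and (iii) if m = 3m′ for an integer m′ ≥ 1, then the divergence of (xyz)^{m′−1}·ρ₁ vanishes, i.e., ∂_x((xyz)^{m′−1}(x^{m+1} − 2xy^m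 − 2xz^m)) + ∂_y((xyz)^{m′−1}(y^{m+1} − 2yz^m − 2yx^m)) + ∂_z((xyz)^{m′−1}(z^{m+1} − 2zx^m − 2zy^m)) = 0. -/
open MvPolynomial

noncomputable section

lemma dtwo (i : Fin 3) : pderiv i (2 : P3) = 0 := by
  rw [show (2 : P3) = C 2 from (map_ofNat (C : ℂ →+* P3) 2).symm]; exact pderiv_C

lemma d01 : pderiv (0:Fin 3) (X 1 : P3) = 0 := pderiv_X_of_ne (by decide)
lemma d02 : pderiv (0:Fin 3) (X 2 : P3) = 0 := pderiv_X_of_ne (by decide)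
lemma d10 : pderiv (1:Fin 3) (X 0 : P3) = 0 := pderiv_X_of_ne (by decide)
lemma d12 : pderiv (1:Fin 3) (X 2 : P3) = 0 := pderiv_X_of_ne (by decide)
lemma d20 : pderiv (2:Fin 3) (X 0 : P3) = 0 := pderiv_X_of_ne (by decide)
lemma d21 : pderiv (2:Fin 3) (X 1 : P3) = 0 := pderiv_X_of_ne (by decide)

set_option maxHeartbeats 3200000 in
/-- For the monomial arrangement `A(m,m,3)`, `m ≥ 2`: `ρ₁` and `ρ₂` are syzygies of
`f`, the divergence of `ρ₂` vanishes, and if `m = 3m'` then the divergence of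
`(xyz)^{m'-1}·ρ₁` vanishes. -/
theorem stmt19 (m : ℕ) (hm : 2 ≤ m) (f : P3)
    (hf : f = (X0 ^ m - X1 ^ m) * (X0 ^ m - X2 ^ m) * (X1 ^ m - X2 ^ m))
    (r1 r2 : P3 × P3 × P3)
    (hr1 : r1 = (X0 ^ (m + 1) - 2 * X0 * X1 ^ m - 2 * X0 * X2 ^ m,
      X1 ^ (m + 1) - 2 * X1 * X2 ^ m - 2 * X1 * X0 ^ m,
      X2 ^ (m + 1) - 2 * X2 * X0 ^ m - 2 * X2 * X1 ^ m))
    (hr2 : r2 = (X1 ^ (m - 1) * X2 ^ (m - 1), X0 ^ (m - 1) * X2 ^ (m - 1),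
      X0 ^ (m - 1) * X1 ^ (m - 1))) :
    (r1.1 * pderiv 0 f + r1.2.1 * pderiv 1 f + r1.2.2 * pderiv 2 f = 0) ∧ (r2.1 * pderiv 0 f + r2.2.1 * pderiv 1 f + r2.2.2 * pderiv 2 f = 0) ∧
    (pderiv 0 r2.1 + pderiv 1 r2.2.1 + pderiv 2 r2.2.2 = 0) ∧
    (∀ m' : ℕ, 1 ≤ m' → m = 3 * m' →
      pderiv 0 ((X0 * X1 * X2) ^ (m' - 1) * r1.1)
        + pderiv 1 ((X0 * X1 * X2) ^ (m' - 1) * r1.2.1)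
        + pderiv 2 ((X0 * X1 * X2) ^ (m' - 1) * r1.2.2) = 0) := by
  subst hf hr1 hr2
  refine ⟨?_, ?_, ?_, ?_⟩
  · obtain ⟨n, rfl⟩ : ∃ n, m = n + 2 := ⟨m - 2, by omega⟩
    simp only [pderiv_mul, map_sub, pderiv_pow, pderiv_X_self, d01, d02, d10, d12, d20, d21, dtwo]
    push_cast
    ring
  · obtain ⟨n, rfl⟩ : ∃ n, m = n + 2 := ⟨m - 2, by omega⟩
    simp only [pderiv_mul, map_sub, pderiv_pow, pderiv_X_self, d01, d02, d10, d12, d20, d21, dtwo]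
    push_cast
    ring
  · obtain ⟨n, rfl⟩ : ∃ n, m = n + 2 := ⟨m - 2, by omega⟩
    simp only [pderiv_mul, map_sub, pderiv_pow, pderiv_X_self, d01, d02, d10, d12, d20, d21, dtwo]
    push_cast
    ring
  · rintro m' hm' rfl
    obtain ⟨p, rfl⟩ : ∃ p, m' = p + 1 := ⟨m' - 1, by omega⟩
    rw [show (X0 * X1 * X2) ^ (p + 1 - 1) *
          (X0 ^ (3 * (p + 1) + 1) - 2 * X0 * X1 ^ (3 * (p + 1)) - 2 * X0 * X2 ^ (3 * (p + 1)))
        = X0 ^ (4 * p + 4) * X1 ^ p * X2 ^ p - 2 * (X0 ^ (p + 1) * X1 ^ (4 * p + 3) * X2 ^ p)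
          - 2 * (X0 ^ (p + 1) * X1 ^ p * X2 ^ (4 * p + 3)) from by simp only [Nat.add_sub_cancel]; ring,
      show (X0 * X1 * X2) ^ (p + 1 - 1) *
          (X1 ^ (3 * (p + 1) + 1) - 2 * X1 * X2 ^ (3 * (p + 1)) - 2 * X1 * X0 ^ (3 * (p + 1)))
        = X1 ^ (4 * p + 4) * X0 ^ p * X2 ^ p - 2 * (X1 ^ (p + 1) * X2 ^ (4 * p + 3) * X0 ^ p)
          - 2 * (X1 ^ (p + 1) * X2 ^ p * X0 ^ (4 * p + 3)) from by simp only [Nat.add_sub_cancel]; ring,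
      show (X0 * X1 * X2) ^ (p + 1 - 1) *
          (X2 ^ (3 * (p + 1) + 1) - 2 * X2 * X0 ^ (3 * (p + 1)) - 2 * X2 * X1 ^ (3 * (p + 1)))
        = X2 ^ (4 * p + 4) * X0 ^ p * X1 ^ p - 2 * (X2 ^ (p + 1) * X0 ^ (4 * p + 3) * X1 ^ p)
          - 2 * (X2 ^ (p + 1) * X0 ^ p * X1 ^ (4 * p + 3)) from by simp only [Nat.add_sub_cancel]; ring]
    simp only [pderiv_mul, map_sub, pderiv_pow, pderiv_X_self, d01, d02, d10, d12, d20, d21, dtwo]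
    push_cast
    ring

end
end
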